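/- arXiv:2601.03999 — 2 statements merged into one kernel-verified Lean document; each statement's English description precedes it below -/
import Mathlib

section
/- Let (X,ρ,μ) be a 𝐝-dimensional metric measure space, K an α-kernel on X, Q a real-valued continuous function on X, s > 1, and f ∈ L¹_loc(X,μ). There exists a constant C (depending on 𝐝, s and the constant of the space) such that for all x ∈ X, all 0 < u₀ < u₁, and all 0 < δ < 1: |S(u₀,x) − S(u₁,x) − S^δ(u₀,x) + S^δ(u₁,x)| ≤ C δ^{1−1/s} (M(|f|^s)(x))^{1/s}, where S(u,x) := S_u(K,Q,f)(x) and S^δ(u,x) := S^δ_u(K,Q,f)(x). -/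
open MeasureTheory Metric Complex Filter Set
open scoped ENNReal NNReal

noncomputable section

/-- `e(t) = e^{it}`. -/
def expi (t : ℝ) : ℂ := Complex.exp (t * Complex.I)

/-- The `r`-variation seminorm (valued in `ℝ≥0∞`) of `a : ℝ → ℂ` along the index set `I`. -/
def vNorm (r : ℝ) (I : Set ℝ) (a : ℝ → ℂ) : ℝ≥0∞ :=
  ⨆ (N : ℕ) (t : ℕ → ℝ) (_ : ∀ n, n ≤ N → t n ∈ I) (_ : ∀ n, n < N → t n < t (n + 1)),
    (∑ n ∈ Finset.range N, (‖a (t (n + 1)) - a (t n)‖₊ : ℝ≥0∞) ^ r) ^ (1 / r)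

/-- The `L^p` norm of an `ℝ≥0∞`-valued function. -/
def lpNormENN {X : Type*} [MeasurableSpace X] (p : ℝ) (μ : Measure X) (g : X → ℝ≥0∞) : ℝ≥0∞ :=
  (∫⁻ x, g x ^ p ∂μ) ^ (1 / p)

/-- `d_B(f,g) = sup_{x,y ∈ B} |f(x)-f(y)-g(x)+g(y)|`. -/
def dB {X : Type*} (B : Set X) (f g : X → ℝ) : ℝ :=
  sSup ((fun q : X × X => |f q.1 - f q.2 - g q.1 + g q.2|) '' (B ×ˢ B))

/-- Inhomogeneous Lipschitz norm `‖φ‖_{C^{0,1}(B)}` on the ball `B = B(z,R)`. -/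
def c01Norm {X : Type*} [MetricSpace X] (z : X) (R : ℝ) (φ : X → ℂ) : ℝ :=
  sSup ((fun x => ‖φ x‖) '' ball z R) +
    R * sSup ((fun q : X × X => ‖φ q.1 - φ q.2‖ / dist q.1 q.2) ''
      ((ball z R ×ˢ ball z R) ∩ {q | q.1 ≠ q.2}))

/-- A compatible collection of real-valued continuous functions, with constant `C`. -/
structure IsCompatible {X : Type*} [MetricSpace X] (𝒬 : Set (X → ℝ)) (C : ℝ) : Prop where
  cont : ∀ Q ∈ 𝒬, Continuous Q
  exists_base : ∃ x₀ : X, ∀ Q ∈ 𝒬, Q x₀ = 0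
  dB_symm : ∀ (z : X) (R : ℝ), 0 < R → ∀ f ∈ 𝒬, ∀ g ∈ 𝒬,
    dB (ball z R) f g = dB (ball z R) g f
  dB_eq_zero : ∀ (z : X) (R : ℝ), 0 < R → ∀ f ∈ 𝒬, ∀ g ∈ 𝒬,
    dB (ball z R) f g = 0 → f = g
  dB_triangle : ∀ (z : X) (R : ℝ), 0 < R → ∀ f ∈ 𝒬, ∀ g ∈ 𝒬, ∀ h ∈ 𝒬,
    dB (ball z R) f h ≤ dB (ball z R) f g + dB (ball z R) g h
  dB_doubling : ∀ (x₁ x₂ : X) (R : ℝ), 0 < R → x₁ ∈ ball x₂ (2 * R) →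
    ∀ f ∈ 𝒬, ∀ g ∈ 𝒬, dB (ball x₂ (2 * R)) f g ≤ C * dB (ball x₁ R) f g
  dB_growth : ∀ (x₁ x₂ : X) (R : ℝ), 0 < R → ball x₁ R ⊆ ball x₂ (C * R) →
    ∀ f ∈ 𝒬, ∀ g ∈ 𝒬, 2 * dB (ball x₁ R) f g ≤ dB (ball x₂ (C * R)) f g
  dB_covering : ∀ (z : X) (R : ℝ), 0 < R → ∀ (R' : ℝ), 0 < R' → ∀ f₀ ∈ 𝒬,
    ∃ F : Finset (X → ℝ), ↑F ⊆ 𝒬 ∧ (F.card : ℝ) ≤ C ∧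
      ∀ g ∈ 𝒬, dB (ball z R) f₀ g ≤ 2 * R' → ∃ h ∈ F, dB (ball z R) h g ≤ R'

/-- The collection `𝒬` is `ε`-cancellative with constant `C`, on a `D`-dimensional space. -/
def IsCancellative {X : Type*} [MetricSpace X] [MeasurableSpace X] (μ : Measure X) (D : ℝ)
    (𝒬 : Set (X → ℝ)) (ε C : ℝ) : Prop :=
  ∀ (z : X) (R : ℝ), 0 < R → ∀ φ : X → ℂ, (∃ L, LipschitzWith L φ) →
    Function.support φ ⊆ ball z R → ∀ f ∈ 𝒬, ∀ g ∈ 𝒬,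
      ‖∫ x in ball z R, expi (f x - g x) * φ x ∂μ‖ ≤
        C * R ^ D * c01Norm z R φ * (1 + dB (ball z R) f g) ^ (-ε)

/-- `α`-kernel on a `D`-dimensional metric measure space. -/
def IsAlphaKernel {X : Type*} [MetricSpace X] [MeasurableSpace X] (D α : ℝ)
    (K : X → X → ℂ) : Prop :=
  Measurable (Function.uncurry K) ∧
  (∀ x y : X, x ≠ y → ‖K x y‖ ≤ dist x y ^ (-D)) ∧
  (∀ x y y' : X, 2 * dist y y' ≤ dist x y →
    ‖K x y - K x y'‖ + ‖K y x - K y' x‖ ≤ (dist y y' / dist x y) ^ α * dist x y ^ (-D))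

/-- One-sided `α`-kernel. -/
def IsOneSidedKernel {X : Type*} [MetricSpace X] [MeasurableSpace X] (D α : ℝ)
    (K : X → X → ℂ) : Prop :=
  Measurable (Function.uncurry K) ∧
  (∀ x y : X, x ≠ y → ‖K x y‖ ≤ dist x y ^ (-D)) ∧
  (∀ x y y' : X, 2 * dist y y' ≤ dist x y →
    ‖K x y - K x y'‖ ≤ (dist y y' / dist x y) ^ α * dist x y ^ (-D))

/-- The cancellation condition for a kernel `K`. -/
def CancelCond {X : Type*} [MetricSpace X] [MeasurableSpace X] (μ : Measure X)
    (K : X → X → ℂ) : Prop :=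
  ∀ (x : X) (R₁ R₂ : ℝ), 0 < R₁ → R₁ < R₂ →
    (∫ y in ball x R₂ \ ball x R₁, K x y ∂μ) = 0 ∧
    (∫ y in ball x R₂ \ ball x R₁, K y x ∂μ) = 0

/-- Truncated modulated singular integral `S_u(K,Q,f)(x)`. -/
def singOp {X : Type*} [MetricSpace X] [MeasurableSpace X] (μ : Measure X) (K : X → X → ℂ)
    (u : ℝ) (Q : X → ℝ) (f : X → ℂ) (x : X) : ℂ :=
  ∫ y in {y | u < dist x y}, K x y * f y * expi (Q y) ∂μ

/-- Truncated modulated average `A_R(Q,f)(x)`. -/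
def avgOp {X : Type*} [MetricSpace X] [MeasurableSpace X] (μ : Measure X)
    (R : ℝ) (Q : X → ℝ) (f : X → ℂ) (x : X) : ℂ :=
  (μ (ball x R)).toReal⁻¹ • ∫ y in ball x R, f y * expi (Q y) ∂μ

/-- `ζ^δ(x) = log(1+δ)⁻¹ 1_{[1,1+δ]}(x)`. -/
def zetaD (δ x : ℝ) : ℝ := (Real.log (1 + δ))⁻¹ * (Set.Icc 1 (1 + δ)).indicator 1 x

/-- `(ζ^δ)_t(x) = t⁻¹ ζ^δ(x/t)`. -/
def zetaDt (δ t x : ℝ) : ℝ := t⁻¹ * zetaD δ (x / t)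

/-- `Z^δ_{a,b}(x) = ∫_a^b (ζ^δ)_t(x) dt`. -/
def Zcut (δ a b x : ℝ) : ℝ := ∫ t in a..b, zetaDt δ t x

/-- `Z^δ_{a,∞}(x) = ∫_a^∞ (ζ^δ)_t(x) dt`. -/
def ZcutInf (δ a x : ℝ) : ℝ := ∫ t in Set.Ioi a, zetaDt δ t x

/-- `δ`-smoothly truncated modulated singular integral `S^δ_u(K,Q,f)(x)`. -/
def singOpD {X : Type*} [MetricSpace X] [MeasurableSpace X] (μ : Measure X) (K : X → X → ℂ)
    (δ u : ℝ) (Q : X → ℝ) (f : X → ℂ) (x : X) : ℂ :=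
  ∫ y, (ZcutInf δ u (dist x y) : ℂ) * K x y * f y * expi (Q y) ∂μ

/-- `δ`-smoothly truncated modulated average `A^δ_R(Q,f)(x)` on a `D`-dimensional space. -/
def avgOpD {X : Type*} [MetricSpace X] [MeasurableSpace X] (μ : Measure X) (D : ℝ)
    (δ R : ℝ) (Q : X → ℝ) (f : X → ℂ) (x : X) : ℂ :=
  (R ^ (-D) : ℝ) • ∫ y, (Zcut δ 0 R (dist x y) : ℂ) * f y * expi (Q y) ∂μ

/-- `M(|f|^s)(x)`, the Hardy–Littlewood maximal function of `|f|^s`. -/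
def maxFn {X : Type*} [MetricSpace X] [MeasurableSpace X] (μ : Measure X) (s : ℝ)
    (f : X → ℂ) (x : X) : ℝ≥0∞ :=
  ⨆ (R : ℝ) (_ : 0 < R), (μ (ball x R))⁻¹ * ∫⁻ y in ball x R, (‖f y‖₊ : ℝ≥0∞) ^ s ∂μ

section AuxZ

/-- Closed form for `ZcutInf`. -/
lemma zform {δ u : ℝ} (hδ : 0 < δ) (hu : 0 < u) {r : ℝ} (hr : 0 ≤ r) :
    ZcutInf δ u r = (Real.log (1 + δ))⁻¹ *
      (Real.log (max r u) - Real.log (max (r / (1 + δ)) u)) := by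
  have h1δ : (0:ℝ) < 1 + δ := by linarith
  set a := r / (1 + δ) with ha_def
  have ha_le : a ≤ r := div_le_self hr (by linarith)
  have ha0 : 0 ≤ a := div_nonneg hr h1δ.le
  set c : ℝ := (Real.log (1 + δ))⁻¹ with hc_def
  have hstep : ∀ t ∈ Set.Ioi u, zetaDt δ t r =
      Set.indicator (Set.Icc a r) (fun t => c * t⁻¹) t := by
    intro t ht
    have ht0 : 0 < t := hu.trans ht
    unfold zetaDt zetaD
    by_cases hmem : t ∈ Set.Icc a r
    · have h1 : r / t ∈ Set.Icc (1:ℝ) (1 + δ) := by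
        constructor
        · rw [le_div_iff₀ ht0]; simpa using hmem.2
        · rw [div_le_iff₀ ht0]
          have := hmem.1
          rw [ha_def, div_le_iff₀ h1δ] at this
          linarith [this]
      rw [Set.indicator_of_mem hmem, Set.indicator_of_mem h1]
      simp only [Pi.one_apply, hc_def]; ring
    · have h1 : r / t ∉ Set.Icc (1:ℝ) (1 + δ) := by
        intro hmem'
        apply hmem
        constructor
        · rw [ha_def, div_le_iff₀ h1δ]
          have := hmem'.2
          rw [div_le_iff₀ ht0] at this
          linarith [this]
        · have := hmem'.1
          rw [le_div_iff₀ ht0] at this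
          linarith [this]
      rw [Set.indicator_of_notMem hmem, Set.indicator_of_notMem h1]
      simp
  have hne : Real.log (1 + δ) ≠ 0 := (Real.log_pos (by linarith)).ne'
  rw [ZcutInf, MeasureTheory.setIntegral_congr_fun measurableSet_Ioi hstep]
  -- replace Icc by Ioc (a.e. equal)
  have haeeq : (fun t => Set.indicator (Set.Icc a r) (fun t => c * t⁻¹) t)
      =ᵐ[MeasureTheory.volume.restrict (Set.Ioi u)]
      (fun t => Set.indicator (Set.Ioc a r) (fun t => c * t⁻¹) t) := by
    apply MeasureTheory.ae_restrict_of_ae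
    have hne' : ∀ᵐ t : ℝ, t ≠ a := by
      rw [MeasureTheory.ae_iff]
      simpa using measure_singleton a
    filter_upwards [hne'] with t hta
    by_cases hmem : t ∈ Set.Ioc a r
    · rw [Set.indicator_of_mem hmem,
        Set.indicator_of_mem (Set.mem_Icc.2 ⟨hmem.1.le, hmem.2⟩)]
    · rw [Set.indicator_of_notMem hmem,
        Set.indicator_of_notMem
          (fun h => hmem ⟨lt_of_le_of_ne h.1 (Ne.symm hta), h.2⟩)]
  rw [MeasureTheory.integral_congr_ae haeeq, MeasureTheory.setIntegral_indicator measurableSet_Ioc,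
    Set.inter_comm, Set.Ioc_inter_Ioi]
  set m := max a u with hm_def
  have hm0 : 0 < m := lt_max_of_lt_right hu
  rcases le_or_gt r u with hru | hru
  · -- r ≤ u : both sides zero
    have h1 : max r u = u := max_eq_right hru
    have h2 : max a u = u := max_eq_right (ha_le.trans hru)
    have hempty : Set.Ioc (a ⊔ u) r = ∅ := Set.Ioc_eq_empty (by
      simp only [not_lt]; exact hru.trans (le_max_right a u))
    rw [hempty, h1, hm_def, h2]
    simp
  · -- u < r
    have hmr : m < r := by
      apply max_lt _ hru
      exact ha_def ▸ div_lt_self (hu.trans hru) (by linarith)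
    have hr0 : 0 < r := hu.trans hru
    rw [max_eq_left hru.le, ← intervalIntegral.integral_of_le hmr.le,
      intervalIntegral.integral_const_mul, integral_inv_of_pos hm0 hr0,
      Real.log_div hr0.ne' hm0.ne']

lemma Z_nonneg {δ u : ℝ} (hδ : 0 < δ) (hu : 0 < u) {r : ℝ} (hr : 0 ≤ r) :
    0 ≤ ZcutInf δ u r := by
  rw [zform hδ hu hr]
  have hlog : 0 < Real.log (1 + δ) := Real.log_pos (by linarith)
  apply mul_nonneg (inv_nonneg.2 hlog.le)
  rw [sub_nonneg]
  apply Real.log_le_log (lt_max_of_lt_right hu)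
  exact max_le_max (div_le_self hr (by linarith)) le_rfl

lemma Z_le_one {δ u : ℝ} (hδ : 0 < δ) (hu : 0 < u) {r : ℝ} (hr : 0 ≤ r) :
    ZcutInf δ u r ≤ 1 := by
  rw [zform hδ hu hr]
  have h1δ : (0:ℝ) < 1 + δ := by linarith
  have hlog : 0 < Real.log (1 + δ) := Real.log_pos (by linarith)
  have hmax0 : 0 < max (r / (1 + δ)) u := lt_max_of_lt_right hu
  have hkey : max r u ≤ (1 + δ) * max (r / (1 + δ)) u := by
    apply max_le
    · calc r = (1 + δ) * (r / (1 + δ)) := by field_simp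
        _ ≤ (1 + δ) * max (r / (1 + δ)) u :=
          mul_le_mul_of_nonneg_left (le_max_left _ _) h1δ.le
    · calc u ≤ (1 + δ) * u := by nlinarith
        _ ≤ (1 + δ) * max (r / (1 + δ)) u :=
          mul_le_mul_of_nonneg_left (le_max_right _ _) h1δ.le
  have hlog2 : Real.log (max r u) - Real.log (max (r / (1 + δ)) u) ≤ Real.log (1 + δ) := by
    have := Real.log_le_log (lt_max_of_lt_right hu) hkey
    rw [Real.log_mul h1δ.ne' hmax0.ne'] at this
    linarith
  calc (Real.log (1 + δ))⁻¹ * (Real.log (max r u) - Real.log (max (r / (1 + δ)) u))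
      ≤ (Real.log (1 + δ))⁻¹ * Real.log (1 + δ) :=
        mul_le_mul_of_nonneg_left hlog2 (inv_nonneg.2 hlog.le)
    _ = 1 := inv_mul_cancel₀ hlog.ne'

lemma Z_zero {δ u : ℝ} (hδ : 0 < δ) (hu : 0 < u) {r : ℝ} (hr : 0 ≤ r) (hru : r ≤ u) :
    ZcutInf δ u r = 0 := by
  rw [zform hδ hu hr, max_eq_right hru,
    max_eq_right ((div_le_self hr (by linarith)).trans hru)]
  simp

lemma Z_one {δ u : ℝ} (hδ : 0 < δ) (hu : 0 < u) {r : ℝ} (hr : 0 ≤ r)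
    (hru : u * (1 + δ) ≤ r) : ZcutInf δ u r = 1 := by
  have h1δ : (0:ℝ) < 1 + δ := by linarith
  have hur : u ≤ r := by nlinarith
  have hr0 : 0 < r := lt_of_lt_of_le hu hur
  have ha : u ≤ r / (1 + δ) := (le_div_iff₀ h1δ).2 hru
  rw [zform hδ hu hr, max_eq_left hur, max_eq_left ha,
    Real.log_div hr0.ne' h1δ.ne']
  have hlog : 0 < Real.log (1 + δ) := Real.log_pos (by linarith)
  field_simp
  ring

end AuxZ

section KeyReal

lemma keyreal {D A s u δ : ℝ} (hD : 0 < D) (hA : 0 < A) (hs : 1 < s)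
    (hu : 0 < u) (hδ : 0 < δ) (hδ1 : δ < 1) :
    u ^ (-D) * (A * (u * (1 + 2*δ)) ^ D) ^ (1/s) *
      (A * (u ^ D * ((1 + 2*δ) ^ D - 1))) ^ (1 - 1/s)
      ≤ (A * 3 ^ D * (1 + 2*D*Real.exp (2*D))) * δ ^ (1 - 1/s) := by
  have h2δ : (1:ℝ) ≤ 1 + 2*δ := by linarith
  have h2δ0 : (0:ℝ) < 1 + 2*δ := by linarith
  have h3 : (1:ℝ) + 2*δ ≤ 3 := by linarith
  have h1s : 0 < 1/s := by positivity
  have h1s1 : 1/s ≤ 1 := by rw [div_le_one (by linarith)]; linarith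
  have he : 0 ≤ 1 - 1/s := by linarith
  have he1 : 1 - 1/s ≤ 1 := by linarith
  set e := 1 - 1/s with he_def
  set cD := 2*D*Real.exp (2*D) with hcD_def
  have hcD0 : 0 ≤ cD := by positivity
  have hc0 : 0 ≤ (1 + 2*δ) ^ D - 1 := by
    have := Real.one_le_rpow h2δ hD.le
    linarith
  set c := (1 + 2*δ) ^ D - 1 with hc_def
  have hcbound : c ≤ cD * δ := by
    have hlog : Real.log (1 + 2*δ) ≤ 2*δ := by
      have := Real.log_le_sub_one_of_pos h2δ0
      linarith
    have h1 : (1 + 2*δ) ^ D = Real.exp (D * Real.log (1 + 2*δ)) := by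
      rw [Real.rpow_def_of_pos h2δ0 D, mul_comm]
    have h2 : Real.exp (D * Real.log (1 + 2*δ)) ≤ Real.exp (2*D*δ) :=
      Real.exp_le_exp.2 (by nlinarith)
    have h4 : Real.exp (-(2*D*δ)) * Real.exp (2*D*δ) = 1 := by
      rw [← Real.exp_add]; simp
    have h5 : -(2*D*δ) + 1 ≤ Real.exp (-(2*D*δ)) := Real.add_one_le_exp _
    have h3' : Real.exp (2*D*δ) - 1 ≤ (2*D*δ) * Real.exp (2*D*δ) := by
      nlinarith [Real.exp_pos (2*D*δ)]
    have h6 : Real.exp (2*D*δ) ≤ Real.exp (2*D) := Real.exp_le_exp.2 (by nlinarith)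
    have h7 : 0 ≤ 2*D*δ := by positivity
    rw [hc_def, h1, hcD_def]
    nlinarith [Real.exp_pos (2*D*δ)]
  -- expand LHS
  have huD : (0:ℝ) < u ^ D := Real.rpow_pos_of_pos hu D
  have expand : u ^ (-D) * (A * (u * (1 + 2*δ)) ^ D) ^ (1/s) * (A * (u ^ D * c)) ^ e
      = (u ^ (-D) * ((u ^ D) ^ (1/s) * (u ^ D) ^ e)) * (A ^ (1/s) * A ^ e) *
        (((1 + 2*δ) ^ D) ^ (1/s) * c ^ e) := by
    rw [Real.mul_rpow hu.le h2δ0.le, Real.mul_rpow hA.le (by positivity),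
      Real.mul_rpow hA.le (by positivity), Real.mul_rpow huD.le hc0,
      Real.mul_rpow (by positivity) (by positivity)]
    ring
  have hu1 : u ^ (-D) * ((u ^ D) ^ (1/s) * (u ^ D) ^ e) = 1 := by
    rw [← Real.rpow_add huD, he_def]
    have : 1/s + (1 - 1/s) = 1 := by ring
    rw [this, Real.rpow_one, ← Real.rpow_add hu]
    simp
  have hA1 : A ^ (1/s) * A ^ e = A := by
    rw [← Real.rpow_add hA, he_def]
    have : 1/s + (1 - 1/s) = 1 := by ring
    rw [this, Real.rpow_one]
  rw [expand, hu1, hA1, one_mul]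
  -- bound the two rpow factors
  have hf1 : ((1 + 2*δ) ^ D) ^ (1/s) ≤ 3 ^ D := by
    calc ((1 + 2*δ) ^ D) ^ (1/s) ≤ ((3:ℝ) ^ D) ^ (1/s) :=
          Real.rpow_le_rpow (by positivity) (Real.rpow_le_rpow h2δ0.le h3 hD.le) h1s.le
      _ ≤ ((3:ℝ) ^ D) ^ (1:ℝ) :=
          Real.rpow_le_rpow_of_exponent_le (Real.one_le_rpow (by norm_num) hD.le) h1s1
      _ = 3 ^ D := Real.rpow_one _
  have hf2 : c ^ e ≤ (1 + cD) * δ ^ e := by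
    calc c ^ e ≤ (cD * δ) ^ e := Real.rpow_le_rpow hc0 hcbound he
      _ = cD ^ e * δ ^ e := Real.mul_rpow hcD0 hδ.le
      _ ≤ (1 + cD) * δ ^ e := by
          apply mul_le_mul_of_nonneg_right _ (Real.rpow_nonneg hδ.le e)
          rcases le_or_gt cD 1 with h | h
          · calc cD ^ e ≤ 1 := Real.rpow_le_one hcD0 h he
              _ ≤ 1 + cD := by linarith
          · calc cD ^ e ≤ cD ^ (1:ℝ) :=
                  Real.rpow_le_rpow_of_exponent_le h.le he1
              _ = cD := Real.rpow_one _
              _ ≤ 1 + cD := by linarith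
  calc A * (((1 + 2*δ) ^ D) ^ (1/s) * c ^ e)
      ≤ A * (3 ^ D * ((1 + cD) * δ ^ e)) := by
        apply mul_le_mul_of_nonneg_left _ hA.le
        apply mul_le_mul hf1 hf2 (by positivity) (by positivity)
    _ = (A * 3 ^ D * (1 + cD)) * δ ^ e := by ring

end KeyReal

section Annulus

variable {X : Type*} [MetricSpace X] [MeasurableSpace X] [BorelSpace X]

lemma annulus_est (μ : Measure X) {D A : ℝ} (hD : 0 < D) (hA : 0 < A)
    (hvol : ∀ (x : X) (R : ℝ), 0 < R → μ (ball x R) = ENNReal.ofReal (A * R ^ D))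
    {s : ℝ} (hs : 1 < s) {f : X → ℂ} (hf : AEStronglyMeasurable f μ)
    (x : X) {u δ : ℝ} (hu : 0 < u) (hδ : 0 < δ) (hδ1 : δ < 1)
    {g : X → ℂ} (hg : ∀ y, u < dist x y → ‖g y‖ ≤ u ^ (-D) * ‖f y‖) :
    ∫⁻ y in {y | u < dist x y ∧ dist x y ≤ u * (1 + δ)}, (‖g y‖₊ : ℝ≥0∞) ∂μ ≤
      ENNReal.ofReal ((A * 3 ^ D * (1 + 2*D*Real.exp (2*D))) * δ ^ (1 - 1/s)) *
        (maxFn μ s f x) ^ (1/s) := by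
  have h1s : 0 < 1/s := by positivity
  have he : 0 ≤ 1 - 1/s := by
    have : 1/s ≤ 1 := by rw [div_le_one (by linarith)]; linarith
    linarith
  set ann : Set X := {y | u < dist x y ∧ dist x y ≤ u * (1 + δ)} with hann_def
  have hdistm : Measurable fun y => dist x y := (continuous_const.dist continuous_id).measurable
  have hann_meas : MeasurableSet ann := by
    have : ann = (fun y => dist x y) ⁻¹' Set.Ioc u (u * (1 + δ)) := rfl
    rw [this]; exact hdistm measurableSet_Ioc
  have hR : 0 < u * (1 + 2*δ) := by nlinarith
  set B : Set X := ball x (u * (1 + 2*δ)) with hB_def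
  have hμB : μ B = ENNReal.ofReal (A * (u * (1 + 2*δ)) ^ D) := hvol x _ hR
  have hμB_ne_top : μ B ≠ ∞ := by rw [hμB]; exact ENNReal.ofReal_ne_top
  have hμB_ne : μ B ≠ 0 := by
    rw [hμB]
    simp only [ne_eq, ENNReal.ofReal_eq_zero, not_le]
    positivity
  have hsubB : ann ⊆ B := by
    intro y hy
    rw [hB_def, mem_ball']
    calc dist x y ≤ u * (1 + δ) := hy.2
      _ < u * (1 + 2*δ) := by nlinarith
  -- Step 1: pointwise kernel bound
  have step1 : ∫⁻ y in ann, (‖g y‖₊ : ℝ≥0∞) ∂μ ≤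
      ENNReal.ofReal (u ^ (-D)) * ∫⁻ y in ann, (‖f y‖₊ : ℝ≥0∞) ∂μ := by
    rw [← MeasureTheory.lintegral_const_mul' _ _ ENNReal.ofReal_ne_top]
    refine MeasureTheory.setLIntegral_mono' hann_meas fun y hy => ?_
    calc (‖g y‖₊ : ℝ≥0∞) = ENNReal.ofReal ‖g y‖ := (ofReal_norm _).symm
      _ ≤ ENNReal.ofReal (u ^ (-D) * ‖f y‖) := ENNReal.ofReal_le_ofReal (hg y hy.1)
      _ = ENNReal.ofReal (u ^ (-D)) * ENNReal.ofReal ‖f y‖ :=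
          ENNReal.ofReal_mul (Real.rpow_nonneg hu.le _)
      _ = ENNReal.ofReal (u ^ (-D)) * (‖f y‖₊ : ℝ≥0∞) := by
          rw [ofReal_norm]; rfl
  -- Step 2: Hölder
  have hq := Real.HolderConjugate.conjExponent hs
  set q := Real.conjExponent s with hq_def
  have h1q : 1/q = 1 - 1/s := by
    have := Real.HolderConjugate.inv_add_inv_eq_one hq
    rw [one_div, one_div]
    linarith
  have step2 : ∫⁻ y in ann, (‖f y‖₊ : ℝ≥0∞) ∂μ ≤
      (∫⁻ y in ann, (‖f y‖₊ : ℝ≥0∞) ^ s ∂μ) ^ (1/s) * (μ ann) ^ (1 - 1/s) := by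
    have hH := ENNReal.lintegral_mul_le_Lp_mul_Lq (μ.restrict ann) hq
      hf.enorm.restrict (aemeasurable_const (b := (1:ℝ≥0∞)))
    simp only [Pi.mul_apply, mul_one, ENNReal.one_rpow] at hH
    calc ∫⁻ y in ann, (‖f y‖₊ : ℝ≥0∞) ∂μ
        ≤ (∫⁻ y in ann, (‖f y‖₊ : ℝ≥0∞) ^ s ∂μ) ^ (1/s) *
          (∫⁻ _ in ann, (1:ℝ≥0∞) ∂μ) ^ (1/q) := hH
      _ = (∫⁻ y in ann, (‖f y‖₊ : ℝ≥0∞) ^ s ∂μ) ^ (1/s) * (μ ann) ^ (1 - 1/s) := by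
          rw [MeasureTheory.setLIntegral_one, h1q]
  -- Step 3: maximal function bound
  have step3 : ∫⁻ y in ann, (‖f y‖₊ : ℝ≥0∞) ^ s ∂μ ≤ μ B * maxFn μ s f x := by
    have hmono : ∫⁻ y in ann, (‖f y‖₊ : ℝ≥0∞) ^ s ∂μ ≤
        ∫⁻ y in B, (‖f y‖₊ : ℝ≥0∞) ^ s ∂μ := MeasureTheory.lintegral_mono_set hsubB
    have hmax : (μ B)⁻¹ * ∫⁻ y in B, (‖f y‖₊ : ℝ≥0∞) ^ s ∂μ ≤ maxFn μ s f x :=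
      le_iSup₂ (f := fun (R : ℝ) (_ : 0 < R) =>
        (μ (ball x R))⁻¹ * ∫⁻ y in ball x R, (‖f y‖₊ : ℝ≥0∞) ^ s ∂μ) (u * (1 + 2*δ)) hR
    calc ∫⁻ y in ann, (‖f y‖₊ : ℝ≥0∞) ^ s ∂μ
        ≤ ∫⁻ y in B, (‖f y‖₊ : ℝ≥0∞) ^ s ∂μ := hmono
      _ = μ B * ((μ B)⁻¹ * ∫⁻ y in B, (‖f y‖₊ : ℝ≥0∞) ^ s ∂μ) := by
          rw [← mul_assoc, ENNReal.mul_inv_cancel hμB_ne hμB_ne_top, one_mul]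
      _ ≤ μ B * maxFn μ s f x := mul_le_mul_right hmax _
  -- Step 4: annulus measure
  have hc0 : 0 ≤ (1 + 2*δ) ^ D - 1 := by
    have := Real.one_le_rpow (show (1:ℝ) ≤ 1 + 2*δ by linarith) hD.le
    linarith
  have step4 : μ ann ≤ ENNReal.ofReal (A * (u ^ D * ((1 + 2*δ) ^ D - 1))) := by
    have hsub2 : ann ⊆ B \ ball x u := by
      intro y hy
      refine ⟨hsubB hy, ?_⟩
      rw [mem_ball']
      exact not_lt.2 hy.1.le
    have hbb : ball x u ⊆ B := ball_subset_ball (by nlinarith)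
    calc μ ann ≤ μ (B \ ball x u) := measure_mono hsub2
      _ = μ B - μ (ball x u) := by
          rw [measure_diff hbb measurableSet_ball.nullMeasurableSet
            (by rw [hvol x u hu]; exact ENNReal.ofReal_ne_top)]
      _ = ENNReal.ofReal (A * (u * (1 + 2*δ)) ^ D) - ENNReal.ofReal (A * u ^ D) := by
          rw [hμB, hvol x u hu]
      _ = ENNReal.ofReal (A * (u * (1 + 2*δ)) ^ D - A * u ^ D) :=
          (ENNReal.ofReal_sub _ (by positivity)).symm
      _ = ENNReal.ofReal (A * (u ^ D * ((1 + 2*δ) ^ D - 1))) := by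
          rw [Real.mul_rpow hu.le (by linarith)]; ring_nf
  -- assemble
  calc ∫⁻ y in ann, (‖g y‖₊ : ℝ≥0∞) ∂μ
      ≤ ENNReal.ofReal (u ^ (-D)) * ∫⁻ y in ann, (‖f y‖₊ : ℝ≥0∞) ∂μ := step1
    _ ≤ ENNReal.ofReal (u ^ (-D)) *
        ((∫⁻ y in ann, (‖f y‖₊ : ℝ≥0∞) ^ s ∂μ) ^ (1/s) * (μ ann) ^ (1 - 1/s)) :=
        mul_le_mul_right step2 _
    _ ≤ ENNReal.ofReal (u ^ (-D)) *
        ((μ B * maxFn μ s f x) ^ (1/s) *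
          (ENNReal.ofReal (A * (u ^ D * ((1 + 2*δ) ^ D - 1)))) ^ (1 - 1/s)) := by
        apply mul_le_mul_right
        exact mul_le_mul' (ENNReal.rpow_le_rpow step3 h1s.le)
          (ENNReal.rpow_le_rpow step4 he)
    _ = (ENNReal.ofReal (u ^ (-D)) * (μ B) ^ (1/s) *
          (ENNReal.ofReal (A * (u ^ D * ((1 + 2*δ) ^ D - 1)))) ^ (1 - 1/s)) *
          (maxFn μ s f x) ^ (1/s) := by
        rw [ENNReal.mul_rpow_of_nonneg _ _ h1s.le]; ring
    _ ≤ ENNReal.ofReal ((A * 3 ^ D * (1 + 2*D*Real.exp (2*D))) * δ ^ (1 - 1/s)) *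
          (maxFn μ s f x) ^ (1/s) := by
        apply mul_le_mul_left
        rw [hμB, ENNReal.ofReal_rpow_of_nonneg (by positivity) h1s.le,
          ENNReal.ofReal_rpow_of_nonneg (by positivity) he,
          ← ENNReal.ofReal_mul (Real.rpow_nonneg hu.le _),
          ← ENNReal.ofReal_mul (by positivity)]
        exact ENNReal.ofReal_le_ofReal (keyreal hD hA hs hu hδ hδ1)

end Annulus

/-- Pointwise bound for the difference between sharp and smooth truncations. -/
lemma pt_bound {X : Type*} [MetricSpace X] (x : X) {δ u : ℝ} (hδ : 0 < δ) (hu : 0 < u)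
    (g : X → ℂ) (y : X) :
    ‖({y | u < dist x y}).indicator g y - ((ZcutInf δ u (dist x y) : ℝ) : ℂ) * g y‖ ≤
      ({y | u < dist x y ∧ dist x y ≤ u * (1 + δ)}).indicator (fun y => ‖g y‖) y := by
  have hS : (y ∈ {y | u < dist x y}) = (u < dist x y) := rfl
  have hAnn : (y ∈ {y | u < dist x y ∧ dist x y ≤ u * (1 + δ)}) =
      (u < dist x y ∧ dist x y ≤ u * (1 + δ)) := rfl
  by_cases h1 : u < dist x y
  · by_cases h2 : dist x y ≤ u * (1 + δ)
    · have hmemA : y ∈ {y | u < dist x y ∧ dist x y ≤ u * (1 + δ)} := hAnn ▸ ⟨h1, h2⟩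
      have hmemS : y ∈ {y | u < dist x y} := hS ▸ h1
      rw [Set.indicator_of_mem hmemA, Set.indicator_of_mem hmemS]
      set Z := ZcutInf δ u (dist x y) with hZ_def
      have hZ0 : 0 ≤ Z := Z_nonneg hδ hu dist_nonneg
      have hZ1 : Z ≤ 1 := Z_le_one hδ hu dist_nonneg
      have heq : g y - ((Z : ℝ) : ℂ) * g y = (((1 - Z : ℝ)) : ℂ) * g y := by
        push_cast; ring
      rw [heq, norm_mul, Complex.norm_real]
      calc |1 - Z| * ‖g y‖ ≤ 1 * ‖g y‖ := by
            apply mul_le_mul_of_nonneg_right _ (norm_nonneg _)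
            rw [abs_le]; constructor <;> linarith
        _ = ‖g y‖ := one_mul _
    · have hZ : ZcutInf δ u (dist x y) = 1 :=
        Z_one hδ hu dist_nonneg (not_le.1 h2).le
      have hmemS : y ∈ {y | u < dist x y} := hS ▸ h1
      have hnA : y ∉ {y | u < dist x y ∧ dist x y ≤ u * (1 + δ)} :=
        fun h => h2 (hAnn ▸ h).2
      rw [Set.indicator_of_notMem hnA, Set.indicator_of_mem hmemS, hZ]
      simp
  · have hZ : ZcutInf δ u (dist x y) = 0 :=
      Z_zero hδ hu dist_nonneg (not_lt.1 h1)
    have hnS : y ∉ {y | u < dist x y} := fun h => h1 (hS ▸ h)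
    have hnA : y ∉ {y | u < dist x y ∧ dist x y ≤ u * (1 + δ)} :=
      fun h => h1 (hAnn ▸ h).1
    rw [Set.indicator_of_notMem hnA, Set.indicator_of_notMem hnS, hZ]
    simp

section SecondCountable

variable {X : Type*} [MetricSpace X] [MeasurableSpace X] [OpensMeasurableSpace X]

lemma ball_totallyBounded (μ : Measure X) {D A : ℝ} (hD : 0 < D) (hA : 0 < A)
    (hvol : ∀ (x : X) (R : ℝ), 0 < R → μ (ball x R) = ENNReal.ofReal (A * R ^ D))
    (z : X) (R : ℝ) : TotallyBounded (ball z R) := by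
  classical
  rcases le_or_gt R 0 with hR | hR
  · rw [ball_eq_empty.2 hR]; exact totallyBounded_empty
  refine Metric.totallyBounded_iff.2 fun ε hε => ?_
  set m : ℝ := A * (ε/2) ^ D with hm_def
  set M : ℝ := A * (R + ε/2) ^ D with hM_def
  have hm : 0 < m := by rw [hm_def]; positivity
  have hM : 0 < M := by rw [hM_def]; positivity
  -- any ε-separated finite subset of the ball has cardinality at most N
  have hsepcard : ∀ t : Finset X, ↑t ⊆ ball z R →
      (∀ y ∈ t, ∀ y' ∈ t, y ≠ y' → ε ≤ dist y y') → (t.card : ℝ) * m ≤ M := by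
    intro t hts hsep
    have hdisj : (↑t : Set X).PairwiseDisjoint (fun y => ball y (ε/2)) := by
      intro y hy y' hy' hne
      apply Set.disjoint_left.2
      intro w hw hw'
      rw [mem_ball] at hw hw'
      have h := hsep y hy y' hy' hne
      have h2 := dist_triangle y w y'
      rw [dist_comm y w] at h2
      linarith
    have hsub : (⋃ y ∈ t, ball y (ε/2)) ⊆ ball z (R + ε/2) := by
      intro w hw
      simp only [Set.mem_iUnion, exists_prop] at hw
      obtain ⟨y, hy, hw⟩ := hw
      rw [mem_ball] at hw ⊢
      have h3 : y ∈ ball z R := hts hy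
      rw [mem_ball] at h3
      calc dist w z ≤ dist w y + dist y z := dist_triangle _ _ _
        _ < ε/2 + R := by linarith
        _ = R + ε/2 := by ring
    have key : (t.card : ℝ≥0∞) * ENNReal.ofReal m ≤ ENNReal.ofReal M := by
      calc (t.card : ℝ≥0∞) * ENNReal.ofReal m = ∑ _y ∈ t, ENNReal.ofReal m := by
            rw [Finset.sum_const, nsmul_eq_mul]
        _ = ∑ y ∈ t, μ (ball y (ε/2)) :=
            Finset.sum_congr rfl fun y _ => (hvol y (ε/2) (by linarith)).symm
        _ = μ (⋃ y ∈ t, ball y (ε/2)) :=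
            (measure_biUnion_finset hdisj fun y _ => measurableSet_ball).symm
        _ ≤ μ (ball z (R + ε/2)) := measure_mono hsub
        _ = ENNReal.ofReal M := hvol z _ (by linarith)
    have key2 : ENNReal.ofReal ((t.card : ℝ) * m) ≤ ENNReal.ofReal M := by
      rw [ENNReal.ofReal_mul (by positivity), ENNReal.ofReal_natCast]
      exact key
    exact (ENNReal.ofReal_le_ofReal_iff hM.le).1 key2
  set N : ℕ := ⌈M / m⌉₊ with hN_def
  have hcard : ∀ t : Finset X, ↑t ⊆ ball z R →
      (∀ y ∈ t, ∀ y' ∈ t, y ≠ y' → ε ≤ dist y y') → t.card ≤ N := by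
    intro t h1 h2
    have h3 := hsepcard t h1 h2
    have h4 : (t.card : ℝ) ≤ M / m := by rw [le_div_iff₀ hm]; linarith
    exact_mod_cast h4.trans (Nat.le_ceil _)
  set P : ℕ → Prop := fun k => ∃ t : Finset X, ↑t ⊆ ball z R ∧
    (∀ y ∈ t, ∀ y' ∈ t, y ≠ y' → ε ≤ dist y y') ∧ t.card = k with hP_def
  have hP0 : P 0 := ⟨∅, by simp, by simp, rfl⟩
  set k := Nat.findGreatest P N with hk_def
  have hPk : P k := Nat.findGreatest_spec (Nat.zero_le N) hP0
  obtain ⟨t, htsub, htsep, htcard⟩ := hPk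
  refine ⟨↑t, t.finite_toSet, fun w hw => ?_⟩
  simp only [Set.mem_iUnion, exists_prop]
  by_contra hcon
  push_neg at hcon
  have hcon' : ∀ y ∈ t, ε ≤ dist w y := by
    intro y hy
    have := hcon y hy
    rw [mem_ball] at this
    linarith [not_lt.1 this]
  have hwnot : w ∉ t := by
    intro hwt
    have := hcon' w hwt
    rw [dist_self] at this
    linarith
  have hP' : P (k + 1) := by
    refine ⟨insert w t, ?_, ?_, ?_⟩
    · intro y hy
      rcases Finset.mem_insert.1 (by exact_mod_cast hy) with h | h
      · rw [h]; exact hw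
      · exact htsub h
    · intro y hy y' hy' hne
      rcases Finset.mem_insert.1 hy with h | h <;>
        rcases Finset.mem_insert.1 hy' with h' | h'
      · exact absurd (h.trans h'.symm) hne
      · rw [h]; exact hcon' y' h'
      · rw [h', dist_comm]; exact hcon' y h
      · exact htsep y h y' h' hne
    · rw [Finset.card_insert_of_notMem hwnot, htcard]
  have hle : k + 1 ≤ N := by
    obtain ⟨t', ht1, ht2, ht3⟩ := hP'
    rw [← ht3]
    exact hcard t' ht1 ht2
  exact Nat.findGreatest_is_greatest (Nat.lt_succ_self k) hle hP'

lemma secondCountable_of_vol (μ : Measure X) {D A : ℝ} (hD : 0 < D) (hA : 0 < A)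
    (hvol : ∀ (x : X) (R : ℝ), 0 < R → μ (ball x R) = ENNReal.ofReal (A * R ^ D)) :
    SecondCountableTopology X := by
  rcases isEmpty_or_nonempty X with h | h
  · exact UniformSpace.secondCountable_of_separable X
  · obtain ⟨x₀⟩ := h
    have hsep : ∀ n : ℕ, TopologicalSpace.IsSeparable (ball x₀ n) := fun n =>
      (ball_totallyBounded μ hD hA hvol x₀ n).isSeparable
    have huniv : (Set.univ : Set X) = ⋃ n : ℕ, ball x₀ n := by
      ext y
      simp only [Set.mem_univ, Set.mem_iUnion, mem_ball, true_iff]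
      obtain ⟨n, hn⟩ := exists_nat_gt (dist y x₀)
      exact ⟨n, hn⟩
    have : TopologicalSpace.IsSeparable (Set.univ : Set X) := by
      rw [huniv]
      exact TopologicalSpace.isSeparable_iUnion.2 hsep
    have : TopologicalSpace.SeparableSpace X := TopologicalSpace.isSeparable_univ_iff.1 this
    exact UniformSpace.secondCountable_of_separable X

end SecondCountable

variable {X : Type*} [MetricSpace X] [CompleteSpace X] [MeasurableSpace X] [BorelSpace X]

theorem stmt13 (μ : Measure X) (D A : ℝ) (hD : 0 < D) (hA : 0 < A)
    (hvol : ∀ (x : X) (R : ℝ), 0 < R → μ (ball x R) = ENNReal.ofReal (A * R ^ D))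
    (α : ℝ) (hα : 0 < α) (hα1 : α ≤ 1) (s : ℝ) (hs : 1 < s) :
    ∃ C > 0, ∀ K : X → X → ℂ, IsAlphaKernel D α K → ∀ Q : X → ℝ, Continuous Q →
      ∀ f : X → ℂ, LocallyIntegrable f μ →
      ∀ (x : X) (u₀ u₁ δ : ℝ), 0 < u₀ → u₀ < u₁ → 0 < δ → δ < 1 →
        (‖singOp μ K u₀ Q f x - singOp μ K u₁ Q f x
            - singOpD μ K δ u₀ Q f x + singOpD μ K δ u₁ Q f x‖₊ : ℝ≥0∞) ≤
          ENNReal.ofReal (C * δ ^ (1 - 1 / s)) * maxFn μ s f x ^ (1 / s) := by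
  refine ⟨2 * (A * 3 ^ D * (1 + 2*D*Real.exp (2*D))), by positivity, ?_⟩
  intro K hK Q hQ f hf x u₀ u₁ δ hu₀ hu01 hδ hδ1
  have hu₁ : 0 < u₁ := hu₀.trans hu01
  have h1s : 0 < 1/s := by positivity
  have hs1 : 1/s ≤ 1 := by rw [div_le_one (by linarith)]; linarith
  have he : 0 ≤ 1 - 1/s := by linarith
  set C' := A * 3 ^ D * (1 + 2*D*Real.exp (2*D)) with hC'_def
  have hC' : 0 < C' := by rw [hC'_def]; positivity
  set g : X → ℂ := fun y => K x y * f y * expi (Q y) with hg_def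
  -- measurability facts
  have hdistm : Measurable fun y => dist x y :=
    (continuous_const.dist continuous_id).measurable
  haveI : SecondCountableTopology X := secondCountable_of_vol μ hD hA hvol
  have hfm := hf.aestronglyMeasurable
  have hexpQ : Continuous fun y => expi (Q y) := by
    unfold expi
    exact Complex.continuous_exp.comp ((Complex.continuous_ofReal.comp hQ).mul continuous_const)
  have hKxm : Measurable (K x) := hK.1.of_uncurry_left
  have hgm : AEStronglyMeasurable g μ :=
    (hKxm.aestronglyMeasurable.mul hfm).mul hexpQ.aestronglyMeasurable
  -- norm bound for g
  have hgnorm : ∀ u : ℝ, 0 < u → ∀ y, u < dist x y → ‖g y‖ ≤ u ^ (-D) * ‖f y‖ := by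
    intro u hu y hy
    have hxy : x ≠ y := by
      intro h; rw [h, dist_self] at hy; linarith
    have hKb : ‖K x y‖ ≤ dist x y ^ (-D) := hK.2.1 x y hxy
    have h2 : dist x y ^ (-D) ≤ u ^ (-D) :=
      Real.rpow_le_rpow_of_nonpos hu hy.le (neg_nonpos.2 hD.le)
    have hexp1 : ‖expi (Q y)‖ = 1 := by
      unfold expi
      exact Complex.norm_exp_ofReal_mul_I _
    calc ‖g y‖ = ‖K x y‖ * ‖f y‖ * ‖expi (Q y)‖ := by
          rw [hg_def]; simp [norm_mul]
      _ = ‖K x y‖ * ‖f y‖ := by rw [hexp1, mul_one]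
      _ ≤ u ^ (-D) * ‖f y‖ := mul_le_mul_of_nonneg_right (hKb.trans h2) (norm_nonneg _)
  -- measurability of the smoothed cutoffs
  have hZm : ∀ u : ℝ, 0 < u → Measurable fun y => ZcutInf δ u (dist x y) := by
    intro u hu
    have heq : (fun y => ZcutInf δ u (dist x y)) = fun y =>
        (Real.log (1 + δ))⁻¹ * (Real.log (max (dist x y) u) -
          Real.log (max ((dist x y) / (1 + δ)) u)) :=
      funext fun y => zform hδ hu dist_nonneg
    rw [heq]
    exact measurable_const.mul
      ((Real.measurable_log.comp (hdistm.max measurable_const)).sub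
        (Real.measurable_log.comp ((hdistm.div_const _).max measurable_const)))
  -- sets
  set S₀ : Set X := {y | u₀ < dist x y} with hS₀_def
  set S₁ : Set X := {y | u₁ < dist x y} with hS₁_def
  set ann₀ : Set X := {y | u₀ < dist x y ∧ dist x y ≤ u₀ * (1 + δ)} with hann₀_def
  set ann₁ : Set X := {y | u₁ < dist x y ∧ dist x y ≤ u₁ * (1 + δ)} with hann₁_def
  have hS₀m : MeasurableSet S₀ := hdistm (measurableSet_Ioi (a := u₀))
  have hS₁m : MeasurableSet S₁ := hdistm (measurableSet_Ioi (a := u₁))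
  have hann₀m : MeasurableSet ann₀ := hdistm (measurableSet_Ioc (a := u₀) (b := u₀ * (1 + δ)))
  have hann₁m : MeasurableSet ann₁ := hdistm (measurableSet_Ioc (a := u₁) (b := u₁ * (1 + δ)))
  -- smoothed integrands
  set φ₀ : X → ℂ := fun y => ((ZcutInf δ u₀ (dist x y) : ℝ) : ℂ) * g y with hφ₀_def
  set φ₁ : X → ℂ := fun y => ((ZcutInf δ u₁ (dist x y) : ℝ) : ℂ) * g y with hφ₁_def
  have hφ₀m : AEStronglyMeasurable φ₀ μ :=
    ((Complex.measurable_ofReal.comp (hZm u₀ hu₀)).aestronglyMeasurable).mul hgm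
  have hφ₁m : AEStronglyMeasurable φ₁ μ :=
    ((Complex.measurable_ofReal.comp (hZm u₁ hu₁)).aestronglyMeasurable).mul hgm
  -- identifications of the four integrals
  have e₀ : singOp μ K u₀ Q f x = ∫ y, S₀.indicator g y ∂μ :=
    (MeasureTheory.integral_indicator hS₀m).symm
  have e₁ : singOp μ K u₁ Q f x = ∫ y, S₁.indicator g y ∂μ :=
    (MeasureTheory.integral_indicator hS₁m).symm
  have d₀ : singOpD μ K δ u₀ Q f x = ∫ y, φ₀ y ∂μ := by
    apply MeasureTheory.integral_congr_ae
    apply MeasureTheory.ae_of_all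
    intro y
    simp only [hφ₀_def, hg_def]; ring
  have d₁ : singOpD μ K δ u₁ Q f x = ∫ y, φ₁ y ∂μ := by
    apply MeasureTheory.integral_congr_ae
    apply MeasureTheory.ae_of_all
    intro y
    simp only [hφ₁_def, hg_def]; ring
  -- the big ball
  have hR₁ : 0 < u₁ * (1 + 2*δ) := by nlinarith
  set B₁ : Set X := ball x (u₁ * (1 + 2*δ)) with hB₁_def
  have hμB₁_ne_top : μ B₁ ≠ ∞ := by rw [hvol x _ hR₁]; exact ENNReal.ofReal_ne_top
  by_cases hinf : ∫⁻ y in B₁, (‖f y‖₊ : ℝ≥0∞) ^ s ∂μ = ∞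
  · -- maximal function is infinite
    have hM : maxFn μ s f x = ∞ := by
      refine eq_top_iff.2 ?_
      refine le_trans ?_ (le_iSup₂ (f := fun (R : ℝ) (_ : 0 < R) =>
        (μ (ball x R))⁻¹ * ∫⁻ y in ball x R, (‖f y‖₊ : ℝ≥0∞) ^ s ∂μ) (u₁ * (1 + 2*δ)) hR₁)
      rw [← hB₁_def, hinf, ENNReal.mul_top (ENNReal.inv_ne_zero.2 hμB₁_ne_top)]
    rw [hM, ENNReal.top_rpow_of_pos h1s, ENNReal.mul_top]
    · exact le_top
    · exact (ENNReal.ofReal_pos.2 (by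
        have : (0:ℝ) < δ ^ (1 - 1/s) := Real.rpow_pos_of_pos hδ _
        nlinarith)).ne'
  · -- f is integrable on B₁
    have hq := Real.HolderConjugate.conjExponent hs
    have hfB : IntegrableOn f B₁ μ := by
      constructor
      · exact hfm.restrict
      · have hH := ENNReal.lintegral_mul_le_Lp_mul_Lq (μ.restrict B₁) hq
          hfm.enorm.restrict (aemeasurable_const (b := (1:ℝ≥0∞)))
        simp only [Pi.mul_apply, mul_one, ENNReal.one_rpow] at hH
        refine lt_of_le_of_lt hH ?_
        apply ENNReal.mul_lt_top
        · exact ENNReal.rpow_lt_top_of_nonneg (by positivity) hinf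
        · rw [MeasureTheory.setLIntegral_one]
          exact ENNReal.rpow_lt_top_of_nonneg hq.symm.one_div_nonneg hμB₁_ne_top
    -- integrability of g on suitable subsets of B₁
    have hfloc : ∀ t : Set X, MeasurableSet t → t ⊆ B₁ →
        (∀ y ∈ t, u₀ < dist x y) → IntegrableOn g t μ := by
      intro t ht htB htd
      refine MeasureTheory.Integrable.mono'
        (((hfB.mono_set htB).norm).const_mul (u₀ ^ (-D))) (hgm.restrict) ?_
      rw [MeasureTheory.ae_restrict_iff' ht]
      exact MeasureTheory.ae_of_all _ fun y hy => hgnorm u₀ hu₀ y (htd y hy)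
    -- subset relations
    have hann₀B : ann₀ ⊆ B₁ := by
      intro y hy
      rw [hB₁_def, mem_ball']
      have h1 := hy.2
      nlinarith [hy.2]
    have hann₁B : ann₁ ⊆ B₁ := by
      intro y hy
      rw [hB₁_def, mem_ball']
      nlinarith [hy.2]
    set mid : Set X := {y | u₀ < dist x y ∧ dist x y ≤ u₁} with hmid_def
    have hmidm : MeasurableSet mid := hdistm (measurableSet_Ioc (a := u₀) (b := u₁))
    have hmidB : mid ⊆ B₁ := by
      intro y hy
      rw [hB₁_def, mem_ball']
      nlinarith [hy.2]
    have hmidint : IntegrableOn g mid μ := hfloc mid hmidm hmidB fun y hy => hy.1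
    -- the difference indicator − smooth is always integrable
    have hrho : ∀ u : ℝ, 0 < u → ({y | u < dist x y ∧ dist x y ≤ u * (1 + δ)} ⊆ B₁) →
        (∀ y ∈ {y | u < dist x y ∧ dist x y ≤ u * (1 + δ)}, u₀ < dist x y) →
        Integrable (fun y => ({y | u < dist x y}).indicator g y -
          ((ZcutInf δ u (dist x y) : ℝ) : ℂ) * g y) μ := by
      intro u hu hannB hannd
      have hannm : MeasurableSet {y | u < dist x y ∧ dist x y ≤ u * (1 + δ)} :=
        hdistm (measurableSet_Ioc (a := u) (b := u * (1 + δ)))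
      have hSm : MeasurableSet {y | u < dist x y} := hdistm (measurableSet_Ioi (a := u))
      refine MeasureTheory.Integrable.mono'
        ((MeasureTheory.integrable_indicator_iff hannm).2 ((hfloc _ hannm hannB hannd).norm))
        ((hgm.indicator hSm).sub
          (((Complex.measurable_ofReal.comp (hZm u hu)).aestronglyMeasurable).mul hgm)) ?_
      exact MeasureTheory.ae_of_all _ fun y => pt_bound x hδ hu g y
    by_cases hS₀int : IntegrableOn g S₀ μ
    · -- main case: everything integrable
      have hS₁int : IntegrableOn g S₁ μ := hS₀int.mono_set fun y hy => hu01.trans hy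
      have hind₀ : Integrable (S₀.indicator g) μ :=
        (MeasureTheory.integrable_indicator_iff hS₀m).2 hS₀int
      have hind₁ : Integrable (S₁.indicator g) μ :=
        (MeasureTheory.integrable_indicator_iff hS₁m).2 hS₁int
      have hρ₀ := hrho u₀ hu₀ hann₀B fun y hy => hy.1
      have hρ₁ := hrho u₁ hu₁ hann₁B fun y hy => hu01.trans hy.1
      have hφ₀ : Integrable φ₀ μ := by
        have heq : φ₀ = fun y => S₀.indicator g y -
            (S₀.indicator g y - ((ZcutInf δ u₀ (dist x y) : ℝ) : ℂ) * g y) :=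
          funext fun y => by rw [hφ₀_def]; ring
        rw [heq]
        exact hind₀.sub hρ₀
      have hφ₁ : Integrable φ₁ μ := by
        have heq : φ₁ = fun y => S₁.indicator g y -
            (S₁.indicator g y - ((ZcutInf δ u₁ (dist x y) : ℝ) : ℂ) * g y) :=
          funext fun y => by rw [hφ₁_def]; ring
        rw [heq]
        exact hind₁.sub hρ₁
      have hind01 : Integrable (fun y => S₀.indicator g y - S₁.indicator g y) μ :=
        hind₀.sub hind₁
      have hind01φ : Integrable (fun y => S₀.indicator g y - S₁.indicator g y - φ₀ y) μ :=
        hind01.sub hφ₀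
      rw [e₀, e₁, d₀, d₁, ← MeasureTheory.integral_sub hind₀ hind₁,
        ← MeasureTheory.integral_sub hind01 hφ₀,
        ← MeasureTheory.integral_add hind01φ hφ₁]
      refine le_trans (MeasureTheory.enorm_integral_le_lintegral_enorm _) ?_
      -- pointwise bound
      have hpt : ∀ y, (‖S₀.indicator g y - S₁.indicator g y - φ₀ y + φ₁ y‖₊ : ℝ≥0∞) ≤
          ann₀.indicator (fun y => (‖g y‖₊ : ℝ≥0∞)) y +
            ann₁.indicator (fun y => (‖g y‖₊ : ℝ≥0∞)) y := by
        intro y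
        have hb₀ := pt_bound x hδ hu₀ g y
        have hb₁ := pt_bound x hδ hu₁ g y
        have hre : ‖S₀.indicator g y - S₁.indicator g y - φ₀ y + φ₁ y‖ ≤
            ann₀.indicator (fun y => ‖g y‖) y + ann₁.indicator (fun y => ‖g y‖) y := by
          have heq : S₀.indicator g y - S₁.indicator g y - φ₀ y + φ₁ y =
              (S₀.indicator g y - ((ZcutInf δ u₀ (dist x y) : ℝ) : ℂ) * g y) -
              (S₁.indicator g y - ((ZcutInf δ u₁ (dist x y) : ℝ) : ℂ) * g y) := by
            rw [hφ₀_def, hφ₁_def]; ring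
          rw [heq]
          exact (norm_sub_le _ _).trans (add_le_add hb₀ hb₁)
        have hconv : ∀ t : Set X,
            ENNReal.ofReal (t.indicator (fun y => ‖g y‖) y) =
              t.indicator (fun y => (‖g y‖₊ : ℝ≥0∞)) y := by
          intro t
          by_cases h : y ∈ t
          · rw [Set.indicator_of_mem h, Set.indicator_of_mem h]
            exact ofReal_norm _
          · rw [Set.indicator_of_notMem h, Set.indicator_of_notMem h,
              ENNReal.ofReal_zero]
        calc (‖S₀.indicator g y - S₁.indicator g y - φ₀ y + φ₁ y‖₊ : ℝ≥0∞)
            = ENNReal.ofReal ‖S₀.indicator g y - S₁.indicator g y - φ₀ y + φ₁ y‖ :=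
              (ofReal_norm _).symm
          _ ≤ ENNReal.ofReal (ann₀.indicator (fun y => ‖g y‖) y +
                ann₁.indicator (fun y => ‖g y‖) y) := ENNReal.ofReal_le_ofReal hre
          _ = ENNReal.ofReal (ann₀.indicator (fun y => ‖g y‖) y) +
                ENNReal.ofReal (ann₁.indicator (fun y => ‖g y‖) y) :=
              ENNReal.ofReal_add (Set.indicator_nonneg (fun _ _ => norm_nonneg _) _)
                (Set.indicator_nonneg (fun _ _ => norm_nonneg _) _)
          _ = ann₀.indicator (fun y => (‖g y‖₊ : ℝ≥0∞)) y +
                ann₁.indicator (fun y => (‖g y‖₊ : ℝ≥0∞)) y := by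
              rw [hconv, hconv]
      calc ∫⁻ y, (‖S₀.indicator g y - S₁.indicator g y - φ₀ y + φ₁ y‖₊ : ℝ≥0∞) ∂μ
          ≤ ∫⁻ y, (ann₀.indicator (fun y => (‖g y‖₊ : ℝ≥0∞)) y +
              ann₁.indicator (fun y => (‖g y‖₊ : ℝ≥0∞)) y) ∂μ :=
            MeasureTheory.lintegral_mono hpt
        _ = (∫⁻ y, ann₀.indicator (fun y => (‖g y‖₊ : ℝ≥0∞)) y ∂μ) +
            ∫⁻ y, ann₁.indicator (fun y => (‖g y‖₊ : ℝ≥0∞)) y ∂μ :=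
            MeasureTheory.lintegral_add_left' (hgm.enorm.indicator hann₀m) _
        _ = (∫⁻ y in ann₀, (‖g y‖₊ : ℝ≥0∞) ∂μ) + ∫⁻ y in ann₁, (‖g y‖₊ : ℝ≥0∞) ∂μ := by
            rw [MeasureTheory.lintegral_indicator hann₀m,
              MeasureTheory.lintegral_indicator hann₁m]
        _ ≤ ENNReal.ofReal (C' * δ ^ (1 - 1/s)) * (maxFn μ s f x) ^ (1/s) +
            ENNReal.ofReal (C' * δ ^ (1 - 1/s)) * (maxFn μ s f x) ^ (1/s) :=
            add_le_add
              (annulus_est μ hD hA hvol hs hfm x hu₀ hδ hδ1 (hgnorm u₀ hu₀))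
              (annulus_est μ hD hA hvol hs hfm x hu₁ hδ hδ1 (hgnorm u₁ hu₁))
        _ = ENNReal.ofReal (2 * C' * δ ^ (1 - 1/s)) * (maxFn μ s f x) ^ (1/s) := by
            rw [← add_mul, ← ENNReal.ofReal_add
              (mul_nonneg hC'.le (Real.rpow_nonneg hδ.le _))
              (mul_nonneg hC'.le (Real.rpow_nonneg hδ.le _))]
            congr 2
            ring
    · -- degenerate case: nothing is integrable, all integrals are zero
      have hS₁int' : ¬ IntegrableOn g S₁ μ := by
        intro h
        apply hS₀int
        have hsplit : S₀ ⊆ S₁ ∪ mid := by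
          intro y hy
          by_cases h1 : u₁ < dist x y
          · exact Or.inl h1
          · exact Or.inr ⟨hy, not_lt.1 h1⟩
        exact (h.union hmidint).mono_set hsplit
      have hρ₀ := hrho u₀ hu₀ hann₀B fun y hy => hy.1
      have hρ₁ := hrho u₁ hu₁ hann₁B fun y hy => hu01.trans hy.1
      have hφ₀' : ¬ Integrable φ₀ μ := by
        intro h
        apply hS₀int
        rw [← MeasureTheory.integrable_indicator_iff hS₀m]
        have heq : S₀.indicator g = fun y => φ₀ y +
            (S₀.indicator g y - ((ZcutInf δ u₀ (dist x y) : ℝ) : ℂ) * g y) :=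
          funext fun y => by rw [hφ₀_def]; ring
        rw [heq]
        exact h.add hρ₀
      have hφ₁' : ¬ Integrable φ₁ μ := by
        intro h
        apply hS₁int'
        rw [← MeasureTheory.integrable_indicator_iff hS₁m]
        have heq : S₁.indicator g = fun y => φ₁ y +
            (S₁.indicator g y - ((ZcutInf δ u₁ (dist x y) : ℝ) : ℂ) * g y) :=
          funext fun y => by rw [hφ₁_def]; ring
        rw [heq]
        exact h.add hρ₁
      have z₀ : singOp μ K u₀ Q f x = 0 := MeasureTheory.integral_undef hS₀int
      have z₁ : singOp μ K u₁ Q f x = 0 := MeasureTheory.integral_undef hS₁int'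
      have z₂ : singOpD μ K δ u₀ Q f x = 0 := by
        rw [d₀]; exact MeasureTheory.integral_undef hφ₀'
      have z₃ : singOpD μ K δ u₁ Q f x = 0 := by
        rw [d₁]; exact MeasureTheory.integral_undef hφ₁'
      rw [z₀, z₁, z₂, z₃]
      simp

end
end

section
/- Let G = (ℝⁿ, ∘, {δ_λ}) be a homogeneous Lie group with right-invariant homogeneous metric ρ and homogeneous dimension 𝐝. Then there exists a constant C₅ > 0 such that for all x, y in the unit ball B(0,1): ρ(x, x − y) ≤ C₅ · ρ(0, y)^{1/𝐝}, where x − y denotes the usual abelian (coordinatewise) subtraction on ℝⁿ and 0 is the group identity. -/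
open MeasureTheory Complex Filter Set
open scoped ENNReal NNReal

noncomputable section

/-- The family of dilations `δ_λ(x)_i = λ^{σ_i} x_i`. -/
def dil {n : ℕ} (σ : Fin n → ℝ) (l : ℝ) (x : Fin n → ℝ) : Fin n → ℝ :=
  fun i => l ^ σ i * x i

/-- A homogeneous Lie group structure on `ℝⁿ`: a polynomial group law `x ∘ y = x + y + P(x,y)`
with identity `0`, together with a family of automorphic dilations with exponents
`1 ≤ σ₁ ≤ … ≤ σₙ`, and a parameter `ε > 0` defining the homogeneous quasi-metric. -/
structure HomLieGroup (n : ℕ) where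
  mul : (Fin n → ℝ) → (Fin n → ℝ) → Fin n → ℝ
  inv : (Fin n → ℝ) → Fin n → ℝ
  mul_assoc : ∀ x y z, mul (mul x y) z = mul x (mul y z)
  zero_mul : ∀ x, mul 0 x = x
  mul_zero : ∀ x, mul x 0 = x
  inv_mul : ∀ x, mul (inv x) x = 0
  mul_inv : ∀ x, mul x (inv x) = 0
  mul_isPoly : ∃ p : Fin n → MvPolynomial (Fin n ⊕ Fin n) ℝ,
    ∀ x y i, mul x y i = MvPolynomial.eval (Sum.elim x y) (p i)
  σ : Fin n → ℝ
  one_le_σ : ∀ i, 1 ≤ σ i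
  σ_mono : Monotone σ
  dil_mul : ∀ l : ℝ, 0 < l → ∀ x y, dil σ l (mul x y) = mul (dil σ l x) (dil σ l y)
  eps : ℝ
  eps_pos : 0 < eps

namespace HomLieGroup

variable {n : ℕ} (G : HomLieGroup n)

/-- The homogeneous dimension `𝐝 = σ₁ + … + σₙ`. -/
def homDim : ℝ := ∑ i, G.σ i

/-- The homogeneous distance `ρ(x,y) = inf {λ > 0 : δ_{λ⁻¹}(x ∘ y⁻¹) ∈ U_ε}`. -/
def rho (x y : Fin n → ℝ) : ℝ :=
  sInf {l : ℝ | 0 < l ∧ ∑ j, (dil G.σ l⁻¹ (G.mul x (G.inv y)) j) ^ 2 < G.eps ^ 2}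

/-- The assertion that `ρ` is a metric (the paper's choice of `ε` guarantees this;
right-invariance is automatic from the definition). -/
def IsMetric : Prop :=
  (∀ x y, 0 ≤ G.rho x y) ∧ (∀ x y, G.rho x y = 0 ↔ x = y) ∧
    (∀ x y, G.rho x y = G.rho y x) ∧ (∀ x y z, G.rho x z ≤ G.rho x y + G.rho y z)

/-- The `ρ`-ball of radius `R` around `z`. -/
def ball (z : Fin n → ℝ) (R : ℝ) : Set (Fin n → ℝ) := {x | G.rho z x < R}

/-- Real-valued Leibman polynomial maps of degree at most `d` on `G`. -/
def IsLeibman : ℕ → ((Fin n → ℝ) → ℝ) → Prop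
  | 0, f => ∀ g g', f (G.mul g' (G.inv g)) - f g' = 0
  | d + 1, f => ∀ g, IsLeibman d fun g' => f (G.mul g' (G.inv g)) - f g'

end HomLieGroup

/-- A measure-preserving action of the homogeneous Lie group `G` on `(X, ν)`. -/
def IsMPAction {n : ℕ} (G : HomLieGroup n) {X : Type*} [MeasurableSpace X] (ν : Measure X)
    (T : (Fin n → ℝ) → X → X) : Prop :=
  Measurable (fun q : (Fin n → ℝ) × X => T q.1 q.2) ∧
    (∀ g h x, T (G.mul g h) x = T g (T h x)) ∧ (∀ x, T 0 x = x) ∧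
    (∀ g, MeasurePreserving (T g) ν ν)

section AuxiliaryLemmas
open MvPolynomial

section LI
def expMHom (w : ℝ) : Multiplicative ℝ →* ℝ where
  toFun t := Real.exp (w * t.toAdd)
  map_one' := by simp
  map_mul' a b := by simp [toAdd_mul, mul_add, Real.exp_add]

lemma expMHom_inj : Function.Injective expMHom := by
  intro a b h
  have := congrArg (fun f : Multiplicative ℝ →* ℝ => f (Multiplicative.ofAdd 1)) h
  simpa [expMHom, Real.exp_eq_exp] using this

lemma exp_li (s : Finset ℝ) (g : ℝ → ℝ)
    (h : ∀ t : ℝ, ∑ w ∈ s, g w * Real.exp (w * t) = 0) : ∀ w ∈ s, g w = 0 := by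
  have li : LinearIndependent ℝ (fun w : ℝ => ⇑(expMHom w)) :=
    (linearIndependent_monoidHom (Multiplicative ℝ) ℝ).comp expMHom expMHom_inj
  intro w hw
  refine linearIndependent_iff'.mp li s g ?_ w hw
  funext t
  have := h t.toAdd
  simpa [expMHom, smul_eq_mul] using this
end LI

variable {V : Type*} [Fintype V] [DecidableEq V]

/-- weighted degree of a monomial -/
def wdeg (w : V → ℝ) (m : V →₀ ℕ) : ℝ := ∑ v ∈ m.support, w v * (m v : ℝ)

lemma prod_rpow_sum (l : ℝ) (hl : 0 < l) (S : Finset V) (f : V → ℝ) :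
    ∏ v ∈ S, l ^ f v = l ^ (∑ v ∈ S, f v) := by
  classical
  induction S using Finset.cons_induction with
  | empty => simp
  | cons a S ha ih =>
      rw [Finset.prod_cons, Finset.sum_cons, ih, ← Real.rpow_add hl]

lemma eval_scale (q : MvPolynomial V ℝ) (w : V → ℝ) (l : ℝ) (hl : 0 < l) (x : V → ℝ) :
    eval (fun v => l ^ w v * x v) q
      = ∑ m ∈ q.support, coeff m q * (l ^ wdeg w m * ∏ v ∈ m.support, x v ^ m v) := by
  rw [eval_eq]
  refine Finset.sum_congr rfl fun m _ => ?_
  congr 1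
  rw [wdeg, ← prod_rpow_sum l hl, ← Finset.prod_mul_distrib]
  refine Finset.prod_congr rfl fun v _ => ?_
  rw [mul_pow, ← Real.rpow_natCast (l ^ w v) (m v), ← Real.rpow_mul hl.le]

lemma homog_wdeg (q : MvPolynomial V ℝ) (w : V → ℝ) (s : ℝ)
    (h : ∀ l : ℝ, 0 < l → ∀ x : V → ℝ,
      eval (fun v => l ^ w v * x v) q = l ^ s * eval x q) :
    ∀ m ∈ q.support, wdeg w m = s := by
  intro m₀ hm₀
  by_contra hne
  have key : ∀ x : V → ℝ,
      eval x (∑ m ∈ q.support.filter (fun m => wdeg w m = wdeg w m₀),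
        monomial m (coeff m q)) = 0 := by
    intro x
    set Ws : Finset ℝ := insert s (q.support.image (wdeg w)) with hWs
    set g : ℝ → ℝ := fun w' =>
      (∑ m ∈ q.support.filter (fun m => wdeg w m = w'),
        coeff m q * ∏ v ∈ m.support, x v ^ m v) - (if w' = s then eval x q else 0) with hgdef
    have hg : ∀ t : ℝ, ∑ w' ∈ Ws, g w' * Real.exp (w' * t) = 0 := by
      intro t
      have hl : (0:ℝ) < Real.exp t := Real.exp_pos t
      have h1 := h (Real.exp t) hl x
      rw [eval_scale q w _ hl x] at h1
      have hrw : ∀ a : ℝ, (Real.exp t) ^ a = Real.exp (a * t) := by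
        intro a
        rw [Real.rpow_def_of_pos hl, Real.log_exp, mul_comm]
      simp only [hrw] at h1
      have fib : ∑ w' ∈ Ws, (∑ m ∈ q.support.filter (fun m => wdeg w m = w'),
          coeff m q * ∏ v ∈ m.support, x v ^ m v) * Real.exp (w' * t)
          = ∑ m ∈ q.support, coeff m q * (Real.exp (wdeg w m * t) * ∏ v ∈ m.support, x v ^ m v) := by
        have fib0 := Finset.sum_fiberwise_of_maps_to (s := q.support) (t := Ws)
          (g := wdeg w)
          (fun m hm => Finset.mem_insert_of_mem (Finset.mem_image_of_mem _ hm))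
          (fun m => coeff m q * (Real.exp (wdeg w m * t) * ∏ v ∈ m.support, x v ^ m v))
        rw [← fib0]
        refine Finset.sum_congr rfl fun w' _ => ?_
        rw [Finset.sum_mul]
        refine Finset.sum_congr rfl fun m hm => ?_
        have : wdeg w m = w' := (Finset.mem_filter.mp hm).2
        rw [← this]; ring
      have ite_sum : ∑ w' ∈ Ws, (if w' = s then eval x q else 0) * Real.exp (w' * t)
          = Real.exp (s * t) * eval x q := by
        have : ∀ w' ∈ Ws, (if w' = s then eval x q else 0) * Real.exp (w' * t)
            = if w' = s then Real.exp (s * t) * eval x q else 0 := by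
          intro w' _
          by_cases hw : w' = s <;> simp [hw, mul_comm]
        rw [Finset.sum_congr rfl this, Finset.sum_ite_eq' Ws s
          (fun _ => Real.exp (s * t) * eval x q)]
        simp [hWs]
      simp only [hgdef, sub_mul, Finset.sum_sub_distrib]
      rw [fib, ite_sum, h1]
      ring
    have hz := exp_li Ws g hg (wdeg w m₀)
      (Finset.mem_insert_of_mem (Finset.mem_image_of_mem _ hm₀))
    have : g (wdeg w m₀) = 0 := hz
    rw [hgdef] at this
    simp only [if_neg hne, sub_zero] at this
    rw [map_sum]
    simpa [eval_monomial, Finsupp.prod] using this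
  have hQ : (∑ m ∈ q.support.filter (fun m => wdeg w m = wdeg w m₀),
      monomial m (coeff m q)) = 0 := by
    apply MvPolynomial.funext
    intro x
    rw [key x, map_zero]
  have hcoeff := congrArg (coeff m₀) hQ
  rw [coeff_zero] at hcoeff
  rw [MvPolynomial.coeff_sum] at hcoeff
  have hmem : m₀ ∈ q.support.filter (fun m => wdeg w m = wdeg w m₀) :=
    Finset.mem_filter.mpr ⟨hm₀, rfl⟩
  rw [Finset.sum_congr rfl (fun m _ => MvPolynomial.coeff_monomial m₀ m (coeff m q)),
    Finset.sum_ite_eq' _ m₀ (fun m => coeff m q), if_pos hmem] at hcoeff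
  exact (MvPolynomial.mem_support_iff.mp hm₀) hcoeff


lemma support_has_var_outside (q : MvPolynomial V ℝ) (A : V → Prop) [DecidablePred A]
    (h0 : ∀ x : V → ℝ, eval (fun v => if A v then x v else 0) q = 0) :
    ∀ m ∈ q.support, ∃ v ∈ m.support, ¬ A v := by
  intro m₀ hm₀
  by_contra hall
  push_neg at hall
  set F := q.support.filter (fun m => ∀ v ∈ m.support, A v) with hF
  have key : ∀ x : V → ℝ, eval x (∑ m ∈ F, monomial m (coeff m q)) = 0 := by
    intro x
    have h1 := h0 x
    rw [eval_eq] at h1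
    rw [← Finset.sum_filter_add_sum_filter_not q.support
      (fun m => ∀ v ∈ m.support, A v)] at h1
    have h2 : ∑ m ∈ q.support.filter (fun m => ¬ ∀ v ∈ m.support, A v),
        coeff m q * ∏ v ∈ m.support, (if A v then x v else 0) ^ m v = 0 := by
      refine Finset.sum_eq_zero fun m hm => ?_
      obtain ⟨v₀, hv₀, hnA⟩ := by
        have := (Finset.mem_filter.mp hm).2
        push_neg at this
        exact this
      rw [Finset.prod_eq_zero hv₀]
      · exact mul_zero _
      · rw [if_neg hnA]
        exact zero_pow (Finsupp.mem_support_iff.mp hv₀)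
    rw [h2, add_zero] at h1
    rw [map_sum]
    rw [← h1]
    refine Finset.sum_congr rfl fun m hm => ?_
    rw [eval_monomial, Finsupp.prod]
    congr 1
    refine Finset.prod_congr rfl fun v hv => ?_
    rw [if_pos ((Finset.mem_filter.mp hm).2 v hv)]
  have hQ : (∑ m ∈ F, monomial m (coeff m q)) = 0 :=
    MvPolynomial.funext fun x => by rw [key x, map_zero]
  have hmem : m₀ ∈ F := Finset.mem_filter.mpr ⟨hm₀, hall⟩
  have hcoeff := congrArg (coeff m₀) hQ
  rw [coeff_zero, MvPolynomial.coeff_sum,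
    Finset.sum_congr rfl (fun m _ => MvPolynomial.coeff_monomial m₀ m (coeff m q)),
    Finset.sum_ite_eq' _ m₀ (fun m => coeff m q), if_pos hmem] at hcoeff
  exact (MvPolynomial.mem_support_iff.mp hm₀) hcoeff

/-- crude bound for the evaluation of a polynomial on a box -/
lemma eval_abs_le (q : MvPolynomial V ℝ) (R : ℝ) (x : V → ℝ) (hR : 1 ≤ R)
    (hx : ∀ v, |x v| ≤ R) :
    |eval x q| ≤ ∑ m ∈ q.support, |coeff m q| * R ^ (∑ v ∈ m.support, m v) := by
  rw [eval_eq]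
  refine (Finset.abs_sum_le_sum_abs _ _).trans (Finset.sum_le_sum fun m _ => ?_)
  rw [abs_mul, Finset.abs_prod]
  refine mul_le_mul_of_nonneg_left ?_ (abs_nonneg _)
  calc ∏ v ∈ m.support, |x v ^ m v| ≤ ∏ v ∈ m.support, R ^ m v := by
        refine Finset.prod_le_prod (fun v _ => abs_nonneg _) fun v _ => ?_
        rw [_root_.abs_pow]
        exact pow_le_pow_left₀ (abs_nonneg _) (hx v) _
    _ = R ^ (∑ v ∈ m.support, m v) := by rw [Finset.prod_pow_eq_pow_sum]

/-- refined bound when every monomial contains a variable in `J` -/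
lemma eval_abs_le_mul (q : MvPolynomial V ℝ) (J : V → Prop) (R M : ℝ) (x : V → ℝ)
    (hR : 1 ≤ R) (hM0 : 0 ≤ M) (hx : ∀ v, |x v| ≤ R) (hxJ : ∀ v, J v → |x v| ≤ M)
    (hmix : ∀ m ∈ q.support, ∃ v, J v ∧ 1 ≤ m v) :
    |eval x q| ≤ (∑ m ∈ q.support, |coeff m q| * R ^ (∑ v ∈ m.support, m v)) * M := by
  rw [eval_eq, Finset.sum_mul]
  refine (Finset.abs_sum_le_sum_abs _ _).trans (Finset.sum_le_sum fun m hm => ?_)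
  rw [abs_mul, Finset.abs_prod, mul_assoc]
  refine mul_le_mul_of_nonneg_left ?_ (abs_nonneg _)
  obtain ⟨v₀, hJ, h1⟩ := hmix m hm
  have hv₀ : v₀ ∈ m.support := Finsupp.mem_support_iff.mpr (by omega)
  have hR0 : (0:ℝ) ≤ R := le_trans zero_le_one hR
  rw [← Finset.mul_prod_erase _ _ hv₀]
  have hb1 : |x v₀ ^ m v₀| ≤ M * R ^ (m v₀ - 1) := by
    rw [_root_.abs_pow]
    have : |x v₀| ^ m v₀ = |x v₀| * |x v₀| ^ (m v₀ - 1) := by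
      rw [← pow_succ']
      congr 1
      omega
    rw [this]
    exact mul_le_mul (hxJ v₀ hJ) (pow_le_pow_left₀ (abs_nonneg _) (hx v₀) _)
      (pow_nonneg (abs_nonneg _) _) hM0
  have hb2 : ∏ v ∈ m.support.erase v₀, |x v ^ m v| ≤ R ^ (∑ v ∈ m.support.erase v₀, m v) := by
    rw [← Finset.prod_pow_eq_pow_sum]
    refine Finset.prod_le_prod (fun v _ => abs_nonneg _) fun v _ => ?_
    rw [_root_.abs_pow]
    exact pow_le_pow_left₀ (abs_nonneg _) (hx v) _
  calc |x v₀ ^ m v₀| * ∏ v ∈ m.support.erase v₀, |x v ^ m v|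
      ≤ (M * R ^ (m v₀ - 1)) * R ^ (∑ v ∈ m.support.erase v₀, m v) := by
        refine mul_le_mul hb1 hb2 (Finset.prod_nonneg fun v _ => abs_nonneg _) ?_
        positivity
    _ = M * R ^ ((m v₀ - 1) + ∑ v ∈ m.support.erase v₀, m v) := by rw [mul_assoc, pow_add]
    _ ≤ R ^ (∑ v ∈ m.support, m v) * M := by
        rw [mul_comm]
        refine mul_le_mul_of_nonneg_right (pow_le_pow_right₀ hR ?_) hM0
        rw [← Finset.add_sum_erase _ _ hv₀]
        omega

namespace HomLieGroup
variable {n : ℕ} (G : HomLieGroup n)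

/-- Set whose infimum defines the homogeneous norm. -/
def Sset (g : Fin n → ℝ) : Set ℝ :=
  {l : ℝ | 0 < l ∧ ∑ j, (dil G.σ l⁻¹ g j) ^ 2 < G.eps ^ 2}

lemma rho_eq (a b : Fin n → ℝ) : G.rho a b = sInf (G.Sset (G.mul a (G.inv b))) := rfl

lemma inv_zero : G.inv 0 = 0 := by
  have h1 := G.inv_mul 0
  rwa [G.mul_zero] at h1

lemma Sset_bddBelow (g : Fin n → ℝ) : BddBelow (G.Sset g) :=
  ⟨0, fun l hl => hl.1.le⟩

lemma mem_Sset_crude (g : Fin n → ℝ) (t : ℝ) (ht : 1 ≤ t)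
    (h : ∑ j, (g j) ^ 2 < G.eps ^ 2 * t ^ 2) : t ∈ G.Sset g := by
  have ht0 : (0:ℝ) < t := lt_of_lt_of_le zero_lt_one ht
  refine ⟨ht0, ?_⟩
  have hterm : ∀ j : Fin n, (dil G.σ t⁻¹ g j) ^ 2 ≤ (t⁻¹) ^ 2 * (g j) ^ 2 := by
    intro j
    have h1 : (t⁻¹ : ℝ) ^ G.σ j ≤ t⁻¹ := by
      have := Real.rpow_le_rpow_of_exponent_ge (x := t⁻¹) (inv_pos.mpr ht0)
        (inv_le_one_of_one_le₀ ht) (G.one_le_σ j)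
      rwa [Real.rpow_one] at this
    have h2 : ((t⁻¹ : ℝ) ^ G.σ j) ^ 2 ≤ (t⁻¹) ^ 2 :=
      pow_le_pow_left₀ (Real.rpow_nonneg (inv_nonneg.mpr ht0.le) _) h1 2
    calc (dil G.σ t⁻¹ g j) ^ 2 = ((t⁻¹:ℝ) ^ G.σ j) ^ 2 * (g j) ^ 2 := by
          rw [dil, mul_pow]
      _ ≤ (t⁻¹) ^ 2 * (g j) ^ 2 := by
          exact mul_le_mul_of_nonneg_right h2 (sq_nonneg _)
  calc ∑ j, (dil G.σ t⁻¹ g j) ^ 2 ≤ ∑ j, (t⁻¹) ^ 2 * (g j) ^ 2 :=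
        Finset.sum_le_sum fun j _ => hterm j
    _ = (t⁻¹) ^ 2 * ∑ j, (g j) ^ 2 := by rw [Finset.mul_sum]
    _ < (t⁻¹) ^ 2 * (G.eps ^ 2 * t ^ 2) := by
        exact mul_lt_mul_of_pos_left h (pow_pos (inv_pos.mpr ht0) 2)
    _ = G.eps ^ 2 := by field_simp

lemma Sset_nonempty (g : Fin n → ℝ) : (G.Sset g).Nonempty := by
  refine ⟨Real.sqrt (∑ j, (g j)^2) / G.eps + 1, G.mem_Sset_crude g _ ?_ ?_⟩
  · have : 0 ≤ Real.sqrt (∑ j, (g j)^2) / G.eps :=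
      div_nonneg (Real.sqrt_nonneg _) G.eps_pos.le
    linarith
  · have hs : Real.sqrt (∑ j, (g j)^2) ^ 2 = ∑ j, (g j)^2 :=
      Real.sq_sqrt (by positivity)
    have hε := G.eps_pos
    have h0 : 0 ≤ Real.sqrt (∑ j, (g j)^2) := Real.sqrt_nonneg _
    have hexp : G.eps ^2 * (Real.sqrt (∑ j, (g j)^2) / G.eps + 1)^2
        = (Real.sqrt (∑ j, (g j)^2) + G.eps)^2 := by field_simp
    rw [hexp]
    nlinarith

lemma inf_Sset_nonneg (g : Fin n → ℝ) : 0 ≤ sInf (G.Sset g) :=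
  le_csInf (G.Sset_nonempty g) fun l hl => hl.1.le

lemma coord_bound_of_mem (g : Fin n → ℝ) (l : ℝ) (hl : l ∈ G.Sset g) :
    ∀ j, |g j| ≤ G.eps * l ^ G.σ j := by
  intro j
  obtain ⟨hl0, hsum⟩ := hl
  have hsingle : (dil G.σ l⁻¹ g j) ^ 2 < G.eps ^ 2 :=
    lt_of_le_of_lt (Finset.single_le_sum (f := fun j => (dil G.σ l⁻¹ g j)^2)
      (fun j _ => sq_nonneg _) (Finset.mem_univ j)) hsum
  have habs : |dil G.σ l⁻¹ g j| ≤ G.eps := by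
    nlinarith [abs_nonneg (dil G.σ l⁻¹ g j), _root_.sq_abs (dil G.σ l⁻¹ g j), G.eps_pos]
  have ha : (0:ℝ) < (l⁻¹) ^ G.σ j := Real.rpow_pos_of_pos (inv_pos.mpr hl0) _
  have h2 : (l⁻¹) ^ G.σ j * |g j| ≤ G.eps := by
    rw [dil, abs_mul, abs_of_pos ha] at habs
    exact habs
  have hinv : (l⁻¹ : ℝ) ^ G.σ j = (l ^ G.σ j)⁻¹ := Real.inv_rpow hl0.le _
  have hlp : (0:ℝ) < l ^ G.σ j := Real.rpow_pos_of_pos hl0 _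
  calc |g j| = l ^ G.σ j * ((l⁻¹) ^ G.σ j * |g j|) := by
        rw [hinv]; field_simp
    _ ≤ l ^ G.σ j * G.eps := mul_le_mul_of_nonneg_left h2 hlp.le
    _ = G.eps * l ^ G.σ j := mul_comm _ _

lemma sigma_le_homDim (j : Fin n) : G.σ j ≤ G.homDim :=
  Finset.single_le_sum (fun i _ => le_trans zero_le_one (G.one_le_σ i)) (Finset.mem_univ j)

lemma homDim_nonneg : 0 ≤ G.homDim :=
  Finset.sum_nonneg fun i _ => le_trans zero_le_one (G.one_le_σ i)

lemma one_le_homDim (hn : 0 < n) : 1 ≤ G.homDim :=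
  le_trans (G.one_le_σ ⟨0, hn⟩) (G.sigma_le_homDim ⟨0, hn⟩)

lemma coord_bound_of_inf_lt (g : Fin n → ℝ) (t : ℝ) (ht : 1 ≤ t)
    (h : sInf (G.Sset g) < t) : ∀ j, |g j| ≤ G.eps * t ^ G.homDim := by
  intro j
  obtain ⟨l, hl, hlt⟩ := exists_lt_of_csInf_lt (G.Sset_nonempty g) h
  have hl0 : 0 < l := hl.1
  have hd0 : 0 ≤ G.homDim := G.homDim_nonneg
  have hbound : l ^ G.σ j ≤ t ^ G.homDim := by
    rcases le_or_gt l 1 with hle | hgt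
    · calc l ^ G.σ j ≤ 1 := Real.rpow_le_one hl0.le hle
            (le_trans zero_le_one (G.one_le_σ j))
        _ = (1:ℝ) ^ G.homDim := (Real.one_rpow _).symm
        _ ≤ t ^ G.homDim := Real.rpow_le_rpow zero_le_one ht hd0
    · calc l ^ G.σ j ≤ l ^ G.homDim :=
            Real.rpow_le_rpow_of_exponent_le hgt.le (G.sigma_le_homDim j)
        _ ≤ t ^ G.homDim := Real.rpow_le_rpow hl0.le hlt.le hd0
  calc |g j| ≤ G.eps * l ^ G.σ j := G.coord_bound_of_mem g l hl j
    _ ≤ G.eps * t ^ G.homDim := mul_le_mul_of_nonneg_left hbound G.eps_pos.le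

lemma coord_bound_fine (g : Fin n → ℝ) (h1 : sInf (G.Sset g) < 1) :
    ∀ j, |g j| ≤ G.eps * sInf (G.Sset g) := by
  intro j
  set r := sInf (G.Sset g) with hrdef
  have hr0 : 0 ≤ r := G.inf_Sset_nonneg g
  have hε := G.eps_pos
  by_contra hcon
  push_neg at hcon
  have hεj : ∀ l, l ∈ G.Sset g → l ≤ 1 → |g j| ≤ G.eps * l := by
    intro l hl hl1
    have hb : l ^ G.σ j ≤ l := by
      have := Real.rpow_le_rpow_of_exponent_ge hl.1 hl1 (G.one_le_σ j)
      rwa [Real.rpow_one] at this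
    exact le_trans (G.coord_bound_of_mem g l hl j)
      (mul_le_mul_of_nonneg_left hb hε.le)
  have hrgj : r < |g j| / G.eps := (lt_div_iff₀ hε).mpr (by linarith [hcon])
  set l₀ : ℝ := min ((r + |g j| / G.eps) / 2) ((r + 1) / 2) with hl₀def
  have hrl₀ : r < l₀ := lt_min (by linarith) (by linarith)
  obtain ⟨l, hl, hlt⟩ := exists_lt_of_csInf_lt (G.Sset_nonempty g) hrl₀
  have hl1 : l ≤ 1 := by
    have := min_le_right ((r + |g j| / G.eps) / 2) ((r + 1) / 2)
    linarith
  have hle := hεj l hl hl1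
  have hl₀le : l₀ ≤ (r + |g j| / G.eps) / 2 := min_le_left _ _
  have hgj : G.eps * (|g j| / G.eps) = |g j| := by field_simp
  nlinarith [hε]

lemma rho_right_zero (a : Fin n → ℝ) : G.rho a 0 = sInf (G.Sset a) := by
  rw [rho_eq, G.inv_zero, G.mul_zero]

lemma rho_left_zero (a : Fin n → ℝ) : G.rho 0 a = sInf (G.Sset (G.inv a)) := by
  rw [rho_eq, G.zero_mul]



lemma mem_Sset_fine (g : Fin n → ℝ) (t : ℝ) (ht0 : 0 < t) (ht1 : t ≤ 1)
    (h : ∑ j, (g j) ^ 2 < G.eps ^ 2 * t ^ (2 * G.homDim)) : t ∈ G.Sset g := by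
  refine ⟨ht0, ?_⟩
  have hinv1 : (1:ℝ) ≤ t⁻¹ := (one_le_inv₀ ht0).mpr ht1
  have hterm : ∀ j : Fin n, (dil G.σ t⁻¹ g j) ^ 2
      ≤ ((t⁻¹) ^ G.homDim) ^ 2 * (g j) ^ 2 := by
    intro j
    have h1 : (t⁻¹ : ℝ) ^ G.σ j ≤ (t⁻¹) ^ G.homDim :=
      Real.rpow_le_rpow_of_exponent_le hinv1 (G.sigma_le_homDim j)
    have h2 : ((t⁻¹ : ℝ) ^ G.σ j) ^ 2 ≤ ((t⁻¹) ^ G.homDim) ^ 2 :=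
      pow_le_pow_left₀ (Real.rpow_nonneg (inv_nonneg.mpr ht0.le) _) h1 2
    calc (dil G.σ t⁻¹ g j) ^ 2 = ((t⁻¹:ℝ) ^ G.σ j) ^ 2 * (g j) ^ 2 := by
          rw [dil, mul_pow]
      _ ≤ ((t⁻¹) ^ G.homDim) ^ 2 * (g j) ^ 2 :=
          mul_le_mul_of_nonneg_right h2 (sq_nonneg _)
  have hcancel : ((t⁻¹:ℝ) ^ G.homDim) ^ 2 * t ^ (2 * G.homDim) = 1 := by
    have hts : (t:ℝ) ^ (2 * G.homDim) = (t ^ G.homDim) * (t ^ G.homDim) := by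
      rw [two_mul, Real.rpow_add ht0]
    have htinv : ((t⁻¹:ℝ) ^ G.homDim) = (t ^ G.homDim)⁻¹ := Real.inv_rpow ht0.le _
    have htp : (0:ℝ) < t ^ G.homDim := Real.rpow_pos_of_pos ht0 _
    rw [hts, htinv]
    field_simp
  calc ∑ j, (dil G.σ t⁻¹ g j) ^ 2 ≤ ∑ j, ((t⁻¹) ^ G.homDim) ^ 2 * (g j) ^ 2 :=
        Finset.sum_le_sum fun j _ => hterm j
    _ = ((t⁻¹) ^ G.homDim) ^ 2 * ∑ j, (g j) ^ 2 := by rw [Finset.mul_sum]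
    _ < ((t⁻¹) ^ G.homDim) ^ 2 * (G.eps ^ 2 * t ^ (2 * G.homDim)) := by
        refine mul_lt_mul_of_pos_left h (pow_pos (Real.rpow_pos_of_pos (inv_pos.mpr ht0) _) 2)
    _ = G.eps ^ 2 := by
        rw [show ((t⁻¹:ℝ) ^ G.homDim) ^ 2 * (G.eps ^ 2 * t ^ (2 * G.homDim))
          = (((t⁻¹:ℝ) ^ G.homDim) ^ 2 * t ^ (2 * G.homDim)) * G.eps ^ 2 by ring,
          hcancel, one_mul]

end HomLieGroup

lemma auxA (nn s e S : ℝ) (hs0 : 0 ≤ s) (hs : s ^ 2 = nn) (he : 0 < e)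
    (hS : S ≤ nn * (2 * e) ^ 2) : S < e ^ 2 * (2 * s + 1) ^ 2 := by nlinarith

lemma auxB (nn Kv e r S : ℝ) (he : 0 < e) (hr : 0 < r)
    (hS : S ≤ nn * (Kv * (e * r)) ^ 2) : S < e ^ 2 * ((nn * Kv ^ 2 + 1) * r ^ 2) := by
  nlinarith [mul_pos (mul_pos he he) (mul_pos hr hr)]

lemma auxC (nn s Kv e r S : ℝ) (hs0 : 0 ≤ s) (hs : s ^ 2 = nn) (he : 0 < e)
    (hK : 1 ≤ Kv) (hr2 : r ^ 2 ≤ 1) (hS : S ≤ nn * (Kv * (e * r)) ^ 2) :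
    S < e ^ 2 * (s * Kv + 1) ^ 2 := by
  nlinarith [mul_pos he he, mul_nonneg (mul_nonneg hs0 (by linarith : (0:ℝ) ≤ Kv)) (mul_pos he he).le,
    mul_nonneg (mul_nonneg (mul_nonneg hs0 hs0) (sq_nonneg Kv)) (mul_pos he he).le]

end AuxiliaryLemmas

set_option maxHeartbeats 2000000 in
theorem stmt17 {n : ℕ} (G : HomLieGroup n) (hρ : G.IsMetric) :
    ∃ C₅ > 0, ∀ x y : Fin n → ℝ, G.rho 0 x < 1 → G.rho 0 y < 1 →
      G.rho x (x - y) ≤ C₅ * G.rho 0 y ^ (1 / G.homDim) := by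
  obtain ⟨hpos, hiff, hsym, htri⟩ := hρ
  rcases Nat.eq_zero_or_pos n with hn | hn
  · refine ⟨1, one_pos, ?_⟩
    intro x y _ _
    subst hn
    have hxy : x - y = x := Subsingleton.elim _ _
    rw [hxy, (hiff x x).mpr rfl, one_mul]
    exact Real.rpow_nonneg (hpos 0 y) _
  obtain ⟨p, hp⟩ := G.mul_isPoly
  have hε : 0 < G.eps := G.eps_pos
  have hd1 : 1 ≤ G.homDim := G.one_le_homDim hn
  have hd0 : 0 < G.homDim := lt_of_lt_of_le one_pos hd1
  set ε := G.eps with hεdef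
  set d := G.homDim with hddef
  set w : Fin n ⊕ Fin n → ℝ := Sum.elim G.σ G.σ with hwdef
  set q : Fin n → MvPolynomial (Fin n ⊕ Fin n) ℝ :=
    fun i => p i - MvPolynomial.X (Sum.inl i) - MvPolynomial.X (Sum.inr i) with hqdef
  have heval : ∀ (a b : Fin n → ℝ) (i : Fin n),
      MvPolynomial.eval (Sum.elim a b) (q i) = G.mul a b i - a i - b i := by
    intro a b i
    simp [hqdef, ← hp a b i]
  have hElim : ∀ x : Fin n ⊕ Fin n → ℝ, Sum.elim (x ∘ Sum.inl) (x ∘ Sum.inr) = x := by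
    intro x; funext v; cases v <;> rfl
  have hom_q : ∀ i : Fin n, ∀ l : ℝ, 0 < l → ∀ x : Fin n ⊕ Fin n → ℝ,
      MvPolynomial.eval (fun v => l ^ w v * x v) (q i)
        = l ^ G.σ i * MvPolynomial.eval x (q i) := by
    intro i l hl x
    have hscale : (fun v => l ^ w v * x v)
        = Sum.elim (dil G.σ l (x ∘ Sum.inl)) (dil G.σ l (x ∘ Sum.inr)) := by
      funext v; cases v <;> rfl
    have h1 := heval (dil G.σ l (x ∘ Sum.inl)) (dil G.σ l (x ∘ Sum.inr)) i
    have h2 := heval (x ∘ Sum.inl) (x ∘ Sum.inr) i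
    rw [hElim x] at h2
    rw [hscale, h1, ← G.dil_mul l hl, h2]
    simp only [dil]
    ring
  have hwdegq : ∀ i : Fin n, ∀ m ∈ (q i).support, wdeg w m = G.σ i :=
    fun i => homog_wdeg (q i) w (G.σ i) (hom_q i)
  have hinl : ∀ i : Fin n, ∀ m ∈ (q i).support, ∃ j : Fin n, Sum.inl j ∈ m.support := by
    intro i
    have h0 : ∀ x : Fin n ⊕ Fin n → ℝ,
        MvPolynomial.eval (fun v => if v.isRight = true then x v else 0) (q i) = 0 := by
      intro x
      have hmask : (fun v : Fin n ⊕ Fin n => if v.isRight = true then x v else 0)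
          = Sum.elim (0 : Fin n → ℝ) (x ∘ Sum.inr) := by
        funext v; cases v <;> rfl
      rw [hmask, heval, G.zero_mul]
      simp
    intro m hm
    obtain ⟨v, hv, hnot⟩ := support_has_var_outside (q i) (fun v => v.isRight = true) h0 m hm
    cases v with
    | inl j => exact ⟨j, hv⟩
    | inr k => simp at hnot
  have hinr : ∀ i : Fin n, ∀ m ∈ (q i).support, ∃ k : Fin n, Sum.inr k ∈ m.support := by
    intro i
    have h0 : ∀ x : Fin n ⊕ Fin n → ℝ,
        MvPolynomial.eval (fun v => if v.isLeft = true then x v else 0) (q i) = 0 := by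
      intro x
      have hmask : (fun v : Fin n ⊕ Fin n => if v.isLeft = true then x v else 0)
          = Sum.elim (x ∘ Sum.inl) (0 : Fin n → ℝ) := by
        funext v; cases v <;> rfl
      rw [hmask, heval, G.mul_zero]
      simp
    intro m hm
    obtain ⟨v, hv, hnot⟩ := support_has_var_outside (q i) (fun v => v.isLeft = true) h0 m hm
    cases v with
    | inl j => simp at hnot
    | inr k => exact ⟨k, hv⟩
  have hw_nonneg : ∀ v : Fin n ⊕ Fin n, 0 ≤ w v := by
    intro v; cases v with
    | inl j => exact le_trans zero_le_one (G.one_le_σ j)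
    | inr k => exact le_trans zero_le_one (G.one_le_σ k)
  have hmix : ∀ i : Fin n, ∀ m ∈ (q i).support,
      ∃ j : Fin n, G.σ j < G.σ i ∧ 1 ≤ m (Sum.inl j) := by
    intro i m hm
    obtain ⟨j, hj⟩ := hinl i m hm
    obtain ⟨k, hk⟩ := hinr i m hm
    have hmj : 1 ≤ m (Sum.inl j) := Nat.one_le_iff_ne_zero.mpr (Finsupp.mem_support_iff.mp hj)
    have hmk : 1 ≤ m (Sum.inr k) := Nat.one_le_iff_ne_zero.mpr (Finsupp.mem_support_iff.mp hk)
    have hW : wdeg w m = G.σ i := hwdegq i m hm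
    have hsub : ({Sum.inl j, Sum.inr k} : Finset (Fin n ⊕ Fin n)) ⊆ m.support :=
      Finset.insert_subset_iff.mpr ⟨hj, Finset.singleton_subset_iff.mpr hk⟩
    have hpair : G.σ j + G.σ k ≤ wdeg w m := by
      have hs1 : G.σ j + G.σ k
          ≤ w (Sum.inl j) * (m (Sum.inl j) : ℝ) + w (Sum.inr k) * (m (Sum.inr k) : ℝ) := by
        have e1 : w (Sum.inl j) = G.σ j := rfl
        have e2 : w (Sum.inr k) = G.σ k := rfl
        have c1 : (1:ℝ) ≤ (m (Sum.inl j) : ℝ) := by exact_mod_cast hmj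
        have c2 : (1:ℝ) ≤ (m (Sum.inr k) : ℝ) := by exact_mod_cast hmk
        have n1 : 0 ≤ G.σ j := le_trans zero_le_one (G.one_le_σ j)
        have n2 : 0 ≤ G.σ k := le_trans zero_le_one (G.one_le_σ k)
        rw [e1, e2]
        have t1 : G.σ j * 1 ≤ G.σ j * (m (Sum.inl j) : ℝ) := mul_le_mul_of_nonneg_left c1 n1
        have t2 : G.σ k * 1 ≤ G.σ k * (m (Sum.inr k) : ℝ) := mul_le_mul_of_nonneg_left c2 n2
        linarith
      have hs2 : w (Sum.inl j) * (m (Sum.inl j) : ℝ) + w (Sum.inr k) * (m (Sum.inr k) : ℝ)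
          = ∑ v ∈ ({Sum.inl j, Sum.inr k} : Finset (Fin n ⊕ Fin n)), w v * (m v : ℝ) := by
        rw [Finset.sum_pair (by simp : (Sum.inl j : Fin n ⊕ Fin n) ≠ Sum.inr k)]
      have hs3 : ∑ v ∈ ({Sum.inl j, Sum.inr k} : Finset (Fin n ⊕ Fin n)), w v * (m v : ℝ)
          ≤ ∑ v ∈ m.support, w v * (m v : ℝ) :=
        Finset.sum_le_sum_of_subset_of_nonneg hsub
          (fun v _ _ => mul_nonneg (hw_nonneg v) (Nat.cast_nonneg _))
      calc G.σ j + G.σ k ≤ _ := hs1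
        _ = _ := hs2
        _ ≤ wdeg w m := hs3
    have hσk : 1 ≤ G.σ k := G.one_le_σ k
    exact ⟨j, by linarith, hmj⟩
  -- constants
  set A₀ : ℝ := 2 * Real.sqrt n + 1 with hA₀def
  have hsqn : 0 ≤ Real.sqrt n := Real.sqrt_nonneg _
  have hA₀1 : 1 ≤ A₀ := by rw [hA₀def]; linarith
  set Rinv : ℝ := ε * (A₀ + 1) ^ d with hRinvdef
  have hRinv0 : 0 ≤ Rinv := mul_nonneg hε.le (Real.rpow_nonneg (by linarith) _)
  set R₀ : ℝ := 1 + 2 * ε + Rinv with hR₀def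
  have hR₀1 : 1 ≤ R₀ := by rw [hR₀def]; linarith
  set Cz : ℝ := ∑ i : Fin n, ∑ m ∈ (p i).support,
    |MvPolynomial.coeff m (p i)| * R₀ ^ (∑ v ∈ m.support, m v) with hCzdef
  have hCz0 : 0 ≤ Cz := Finset.sum_nonneg fun i _ => Finset.sum_nonneg fun m _ =>
    mul_nonneg (abs_nonneg _) (pow_nonneg (by linarith) _)
  set R : ℝ := R₀ + Cz with hRdef
  have hR1 : 1 ≤ R := by rw [hRdef]; linarith
  set Cmax : ℝ := ∑ i : Fin n, ∑ m ∈ (q i).support,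
    |MvPolynomial.coeff m (q i)| * R ^ (∑ v ∈ m.support, m v) with hCmaxdef
  have hCmax0 : 0 ≤ Cmax := Finset.sum_nonneg fun i _ => Finset.sum_nonneg fun m _ =>
    mul_nonneg (abs_nonneg _) (pow_nonneg (by linarith) _)
  set κ : ℝ := 1 + Cmax with hκdef
  have hκ1 : 1 ≤ κ := by rw [hκdef]; linarith
  set K : ℝ := κ ^ n with hKdef
  have hK1 : 1 ≤ K := one_le_pow₀ hκ1
  set B : ℝ := (n : ℝ) * K ^ 2 + 1 with hBdef
  have hB1 : 1 ≤ B := by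
    have : (0:ℝ) ≤ (n:ℝ) * K ^ 2 := mul_nonneg (Nat.cast_nonneg _) (sq_nonneg _)
    rw [hBdef]; linarith
  have hB0 : 0 < B := lt_of_lt_of_le one_pos hB1
  set Az : ℝ := Real.sqrt n * K + 1 with hAzdef
  have hAz1 : 1 ≤ Az := by
    have : 0 ≤ Real.sqrt n * K := mul_nonneg hsqn (by linarith)
    rw [hAzdef]; linarith
  refine ⟨Az * B ^ (1 / (2 * d)), ?_, ?_⟩
  · exact mul_pos (lt_of_lt_of_le one_pos hAz1) (Real.rpow_pos_of_pos hB0 _)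
  intro x y hx hy
  -- coordinate bounds for x and y
  have hrx : sInf (G.Sset x) < 1 := by
    rw [← G.rho_right_zero, hsym x 0]
    exact hx
  have hxj : ∀ j, |x j| ≤ ε := by
    intro j
    have := G.coord_bound_of_inf_lt x 1 le_rfl hrx j
    rwa [Real.one_rpow, mul_one] at this
  set r := G.rho 0 y with hrdef
  have hr1 : r < 1 := hy
  have hr0 : 0 ≤ r := hpos 0 y
  have hry : sInf (G.Sset y) = r := by
    rw [← G.rho_right_zero, hsym y 0]
  have hyj : ∀ j, |y j| ≤ ε * r := by
    intro j
    have := G.coord_bound_fine y (by rw [hry]; exact hr1) j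
    rwa [hry] at this
  have hεr0 : 0 ≤ ε * r := mul_nonneg hε.le hr0
  set u := x - y with hudef
  have huj : ∀ j, |u j| ≤ 2 * ε := by
    intro j
    have h1 : u j = x j - y j := rfl
    have h2 : |x j - y j| ≤ |x j| + |y j| := abs_sub _ _
    have h3 : ε * r ≤ ε * 1 := mul_le_mul_of_nonneg_left hr1.le hε.le
    rw [h1]
    calc |x j - y j| ≤ |x j| + |y j| := h2
      _ ≤ ε + ε * r := add_le_add (hxj j) (hyj j)
      _ ≤ 2 * ε := by linarith
  -- bound on inv u
  have hinfu : sInf (G.Sset u) ≤ A₀ := by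
    refine csInf_le (G.Sset_bddBelow u) (G.mem_Sset_crude u A₀ hA₀1 ?_)
    have hsum : ∑ j, (u j) ^ 2 ≤ (n : ℝ) * (2 * ε) ^ 2 := by
      calc ∑ j, (u j) ^ 2 ≤ ∑ _j : Fin n, (2 * ε) ^ 2 :=
            Finset.sum_le_sum fun j _ =>
              calc (u j) ^ 2 = |u j| ^ 2 := (_root_.sq_abs _).symm
                _ ≤ (2 * ε) ^ 2 := pow_le_pow_left₀ (abs_nonneg _) (huj j) 2
        _ = (n : ℝ) * (2 * ε) ^ 2 := by
            rw [Finset.sum_const, Finset.card_univ, Fintype.card_fin, nsmul_eq_mul]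
    have hsq : Real.sqrt n ^ 2 = (n : ℝ) := Real.sq_sqrt (Nat.cast_nonneg n)
    rw [hA₀def]
    exact auxA _ _ _ _ hsqn hsq hε hsum
  have hinvu_inf : sInf (G.Sset (G.inv u)) ≤ A₀ := by
    rw [← G.rho_left_zero, hsym 0 u, G.rho_right_zero]
    exact hinfu
  have hinvuj : ∀ j, |G.inv u j| ≤ Rinv := by
    intro j
    have := G.coord_bound_of_inf_lt (G.inv u) (A₀ + 1) (by linarith)
      (lt_of_le_of_lt hinvu_inf (by linarith)) j
    rwa [← hddef, ← hεdef, ← hRinvdef] at this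
  set z := G.mul x (G.inv u) with hzdef
  have hzj : ∀ i, |z i| ≤ Cz := by
    intro i
    have hzi : z i = MvPolynomial.eval (Sum.elim x (G.inv u)) (p i) := hp x (G.inv u) i
    have hb : ∀ v, |Sum.elim x (G.inv u) v| ≤ R₀ := by
      intro v
      cases v with
      | inl j =>
          simp only [Sum.elim_inl]
          have := hxj j; rw [hR₀def]; linarith
      | inr k =>
          simp only [Sum.elim_inr]
          have := hinvuj k; rw [hR₀def]; linarith
    rw [hzi]
    refine le_trans (eval_abs_le (p i) R₀ _ hR₀1 hb) ?_
    rw [hCzdef]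
    exact Finset.single_le_sum
      (f := fun i => ∑ m ∈ (p i).support,
        |MvPolynomial.coeff m (p i)| * R₀ ^ (∑ v ∈ m.support, m v))
      (fun i _ => Finset.sum_nonneg fun m _ =>
        mul_nonneg (abs_nonneg _) (pow_nonneg (by linarith) _))
      (Finset.mem_univ i)
  have hzR : ∀ v, |Sum.elim z u v| ≤ R := by
    intro v
    cases v with
    | inl i =>
        simp only [Sum.elim_inl]
        have := hzj i; rw [hRdef]; linarith
    | inr j =>
        simp only [Sum.elim_inr]
        have := huj j; rw [hRdef, hR₀def]; linarith
  have hzu : G.mul z u = x := by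
    rw [hzdef, G.mul_assoc, G.inv_mul, G.mul_zero]
  have hz_eq : ∀ i, z i = y i - MvPolynomial.eval (Sum.elim z u) (q i) := by
    intro i
    have h1 := heval z u i
    rw [hzu] at h1
    have h2 : u i = x i - y i := rfl
    rw [h1, h2]
    ring
  -- the key induction
  have hstep : ∀ k : ℕ, ∀ i : Fin n, (i : ℕ) < k → |z i| ≤ κ ^ ((i : ℕ) + 1) * (ε * r) := by
    intro k
    induction k with
    | zero => intro i hi; exact absurd hi (Nat.not_lt_zero _)
    | succ k IH =>
      intro i hik
      have hM : ∀ jj : Fin n, G.σ jj < G.σ i → |z jj| ≤ κ ^ (i : ℕ) * (ε * r) := by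
        intro jj hjj
        have hji : (jj : ℕ) < (i : ℕ) := by
          by_contra hle
          push_neg at hle
          have : G.σ i ≤ G.σ jj := G.σ_mono (by exact_mod_cast hle : i ≤ jj)
          linarith
        have hIH := IH jj (by omega)
        refine le_trans hIH ?_
        exact mul_le_mul_of_nonneg_right (pow_le_pow_right₀ hκ1 (by omega)) hεr0
      have hEb : |MvPolynomial.eval (Sum.elim z u) (q i)|
          ≤ (∑ m ∈ (q i).support,
              |MvPolynomial.coeff m (q i)| * R ^ (∑ v ∈ m.support, m v))
            * (κ ^ (i : ℕ) * (ε * r)) := by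
        refine eval_abs_le_mul (q i)
          (fun v => ∃ j : Fin n, v = Sum.inl j ∧ G.σ j < G.σ i) R _ _ hR1
          (mul_nonneg (pow_nonneg (by linarith) _) hεr0) hzR ?_ ?_
        · rintro v ⟨j, rfl, hj⟩
          exact hM j hj
        · intro m hm
          obtain ⟨j, hσj, h1⟩ := hmix i m hm
          exact ⟨Sum.inl j, ⟨j, rfl, hσj⟩, h1⟩
      have hCi : (∑ m ∈ (q i).support,
          |MvPolynomial.coeff m (q i)| * R ^ (∑ v ∈ m.support, m v)) ≤ Cmax := by
        rw [hCmaxdef]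
        exact Finset.single_le_sum
          (f := fun i => ∑ m ∈ (q i).support,
            |MvPolynomial.coeff m (q i)| * R ^ (∑ v ∈ m.support, m v))
          (fun i _ => Finset.sum_nonneg fun m _ =>
            mul_nonneg (abs_nonneg _) (pow_nonneg (by linarith) _))
          (Finset.mem_univ i)
      have hκi1 : (1:ℝ) ≤ κ ^ (i : ℕ) := one_le_pow₀ hκ1
      have hκi0 : (0:ℝ) ≤ κ ^ (i : ℕ) := by linarith
      calc |z i| = |y i - MvPolynomial.eval (Sum.elim z u) (q i)| := by rw [← hz_eq i]
        _ ≤ |y i| + |MvPolynomial.eval (Sum.elim z u) (q i)| := abs_sub _ _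
        _ ≤ ε * r + Cmax * (κ ^ (i : ℕ) * (ε * r)) := by
            refine add_le_add (hyj i) (le_trans hEb ?_)
            exact mul_le_mul_of_nonneg_right hCi
              (mul_nonneg hκi0 hεr0)
        _ ≤ κ ^ ((i : ℕ) + 1) * (ε * r) := by
            have hid : κ ^ ((i : ℕ) + 1) * (ε * r)
                = κ ^ (i : ℕ) * (ε * r) + Cmax * (κ ^ (i : ℕ) * (ε * r)) := by
              rw [pow_succ, hκdef]; ring
            rw [hid]
            have h2 : ε * r ≤ κ ^ (i : ℕ) * (ε * r) := le_mul_of_one_le_left hεr0 hκi1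
            linarith
  have hzK : ∀ i, |z i| ≤ K * (ε * r) := by
    intro i
    refine le_trans (hstep ((i : ℕ) + 1) i (Nat.lt_succ_self _)) ?_
    refine mul_le_mul_of_nonneg_right ?_ hεr0
    rw [hKdef]
    exact pow_le_pow_right₀ hκ1 i.isLt
  have hgoal_eq : G.rho x u = sInf (G.Sset z) := by
    rw [G.rho_eq x u, ← hzdef]
  rcases eq_or_lt_of_le hr0 with hr0' | hrpos
  · -- r = 0
    have hy0 : y = 0 := ((hiff 0 y).mp hr0'.symm).symm
    have hz0 : G.rho x (x - y) = 0 := by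
      rw [hy0, sub_zero]
      exact (hiff x x).mpr rfl
    rw [hudef, hz0, ← hr0', Real.zero_rpow (one_div_ne_zero (ne_of_gt hd0)), mul_zero]
  · -- 0 < r
    have hsumz : ∑ i, (z i) ^ 2 ≤ (n : ℝ) * (K * (ε * r)) ^ 2 := by
      calc ∑ i, (z i) ^ 2 ≤ ∑ _i : Fin n, (K * (ε * r)) ^ 2 :=
            Finset.sum_le_sum fun i _ =>
              calc (z i) ^ 2 = |z i| ^ 2 := (_root_.sq_abs _).symm
                _ ≤ (K * (ε * r)) ^ 2 := pow_le_pow_left₀ (abs_nonneg _)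
                  (hzK i) 2
        _ = (n : ℝ) * (K * (ε * r)) ^ 2 := by
            rw [Finset.sum_const, Finset.card_univ, Fintype.card_fin, nsmul_eq_mul]
    have hεrpos : 0 < ε * r := mul_pos hε hrpos
    have hdne : d ≠ 0 := ne_of_gt hd0
    have h2d0 : (0:ℝ) < 2 * d := by linarith
    have hexp0 : (0:ℝ) ≤ 1 / (2 * d) := le_of_lt (one_div_pos.mpr h2d0)
    have hfact : (B * r ^ 2) ^ (1 / (2 * d)) = B ^ (1 / (2 * d)) * r ^ ((1:ℝ) / d) := by
      rw [Real.mul_rpow hB0.le (sq_nonneg r)]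
      congr 1
      rw [← Real.rpow_natCast r 2, ← Real.rpow_mul hrpos.le]
      congr 1
      push_cast
      field_simp
    rw [hgoal_eq]
    by_cases hBr : B * r ^ 2 < 1
    · set t := (B * r ^ 2) ^ (1 / (2 * d)) with htdef
      have hBr0 : 0 < B * r ^ 2 := mul_pos hB0 (pow_pos hrpos 2)
      have ht0 : 0 < t := Real.rpow_pos_of_pos hBr0 _
      have ht1 : t ≤ 1 := Real.rpow_le_one hBr0.le hBr.le hexp0
      have htpow : t ^ (2 * d) = B * r ^ 2 := by
        rw [htdef, ← Real.rpow_mul hBr0.le, one_div, inv_mul_cancel₀ (ne_of_gt h2d0),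
          Real.rpow_one]
      have hmem : t ∈ G.Sset z := by
        refine G.mem_Sset_fine z t ht0 ht1 ?_
        have key : (n : ℝ) * (K * (ε * r)) ^ 2 < ε ^ 2 * (B * r ^ 2) := by
          rw [hBdef]
          exact auxB _ _ _ _ _ hε hrpos le_rfl
        calc ∑ i, (z i) ^ 2 ≤ (n : ℝ) * (K * (ε * r)) ^ 2 := hsumz
          _ < ε ^ 2 * (B * r ^ 2) := key
          _ = ε ^ 2 * t ^ (2 * d) := by rw [htpow]
      have hle := csInf_le (G.Sset_bddBelow z) hmem
      refine le_trans hle ?_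
      rw [hfact]
      have h1 : B ^ (1 / (2 * d)) ≤ Az * B ^ (1 / (2 * d)) :=
        le_mul_of_one_le_left (Real.rpow_nonneg hB0.le _) hAz1
      calc B ^ (1 / (2 * d)) * r ^ ((1:ℝ) / d)
          ≤ (Az * B ^ (1 / (2 * d))) * r ^ ((1:ℝ) / d) :=
            mul_le_mul_of_nonneg_right h1 (Real.rpow_nonneg hr0 _)
        _ = Az * B ^ (1 / (2 * d)) * r ^ ((1:ℝ) / d) := by ring
    · push_neg at hBr
      have hcr : sInf (G.Sset z) ≤ Az := by
        refine csInf_le (G.Sset_bddBelow z) (G.mem_Sset_crude z Az hAz1 ?_)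
        have hsq2 : Real.sqrt n ^ 2 = (n : ℝ) := Real.sq_sqrt (Nat.cast_nonneg n)
        have hr2 : r ^ 2 ≤ 1 := pow_le_one₀ hr0 hr1.le
        have key : (n : ℝ) * (K * (ε * r)) ^ 2 < ε ^ 2 * Az ^ 2 := by
          rw [hAzdef]
          exact auxC _ _ _ _ _ _ hsqn hsq2 hε hK1 hr2 le_rfl
        exact lt_of_le_of_lt hsumz key
      have hBre : (1:ℝ) ≤ B ^ (1 / (2 * d)) * r ^ ((1:ℝ) / d) := by
        rw [← hfact]
        calc (1:ℝ) = 1 ^ (1 / (2 * d)) := (Real.one_rpow _).symm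
          _ ≤ (B * r ^ 2) ^ (1 / (2 * d)) := Real.rpow_le_rpow zero_le_one hBr hexp0
      calc sInf (G.Sset z) ≤ Az := hcr
        _ = Az * 1 := (mul_one _).symm
        _ ≤ Az * (B ^ (1 / (2 * d)) * r ^ ((1:ℝ) / d)) :=
            mul_le_mul_of_nonneg_left hBre (by linarith)
        _ = Az * B ^ (1 / (2 * d)) * r ^ ((1:ℝ) / d) := by ring

end
end
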